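/- arXiv:1704.07860 — 6 statements merged into one kernel-verified Lean document; each statement's English description precedes it below -/
import Mathlib

section
/- For all positive integers k and n with k, n > 1, the word W_{k,n} equals W_{k,n-1} a_n W_{k-1,n-1} a_n W_{k-2,n-1} a_n ⋯ a_n W_{1,n-1} a_n, i.e., W_{k,n} is the concatenation over i = 0, 1, ..., k-1 of W_{k-i,n-1} · a_n. -/
/-- The word `W k n` over alphabet {1,...,n} (letter `a_i` encoded as `i`):
`W k 1 = a1^k`, `W 1 n = a1 a2 ... an`, `W k n = W k (n-1) ++ [a_n] ++ W (k-1) n`,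
and `W k n = ε` when `k = 0` or `n = 0`. -/
def W : ℕ → ℕ → List ℕ
  | 0, _ => []
  | _+1, 0 => []
  | k+1, n+1 => W (k+1) n ++ (n+1) :: W k (n+1)
termination_by k n => k + n

lemma aux (k n : ℕ) :
    W (k+1) (n+1) = (((List.range (k+1)).map fun i => W (k+1-i) n ++ [n+1])).flatten := by
  induction k with
  | zero => simp [W, List.range_succ]
  | succ k ih =>
      rw [List.range_succ_eq_map, List.map_cons, List.flatten_cons, List.map_map,
        show W (k+1+1) (n+1) = W (k+2) n ++ (n+1) :: W (k+1) (n+1) by rw [W], ih]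
      simp [Function.comp_def, Nat.succ_sub_succ]

/-- For `k, n > 1`, `W_{k,n}` is the concatenation over `i = 0, ..., k-1` of
`W_{k-i, n-1} · a_n`. -/
theorem stmt_2 (k n : ℕ) (hk : 1 < k) (hn : 1 < n) :
    W k n = (((List.range k).map fun i => W (k - i) (n - 1) ++ [n])).flatten := by
  obtain ⟨k, rfl⟩ : ∃ m, k = m + 1 := ⟨k-1, by omega⟩
  obtain ⟨n, rfl⟩ : ∃ m, n = m + 1 := ⟨n-1, by omega⟩
  simpa using aux k n
end

section
/- For all positive integers k, n and every i with 1 ≤ i ≤ n, every maximal factor of W_{k,n} over the subalphabet {a_1, ..., a_i} contains at most k occurrences of the letter a_i. More precisely, W_{k,n} has no factor belonging to ({a_1,...,a_{i-1}}^* a_i)^{k+1}, i.e., no factor containing k+1 occurrences of a_i interleaved only with letters a_j for j < i. -/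
theorem memW (k n : ℕ) : ∀ c ∈ W k n, c ≤ n := by
  match k, n with
  | 0, _ => simp [W]
  | _+1, 0 => simp [W]
  | k+1, n+1 =>
    intro c hc
    rw [W] at hc
    simp only [List.mem_append, List.mem_cons] at hc
    rcases hc with h | h | h
    · exact (memW (k+1) n c h).trans (Nat.le_succ n)
    · omega
    · exact memW k (n+1) c h
termination_by k + n

theorem countW (k n : ℕ) : (W k (n+1)).count (n+1) = k := by
  induction k with
  | zero => simp [W]
  | succ k ih =>
    rw [W]
    have h0 : (W (k+1) n).count (n+1) = 0 := by
      rw [List.count_eq_zero]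
      intro h
      have := memW (k+1) n (n+1) h
      omega
    simp [List.count_append, List.count_cons, h0, ih]

theorem infix_split {α : Type*} [DecidableEq α] {a b f : List α} {x : α}
    (h : f <:+: a ++ x :: b) (hx : x ∉ f) : f <:+: a ∨ f <:+: b := by
  obtain ⟨s, t, hst⟩ := h
  rcases le_or_gt (s.length + f.length) a.length with h1 | h1
  · left
    have hp : s ++ f <+: a ++ x :: b := ⟨t, by simpa [List.append_assoc] using hst⟩
    have hp2 : s ++ f <+: a :=
      List.prefix_of_prefix_length_le hp (List.prefix_append _ _) (by simpa using h1)
    exact ((List.suffix_append s f).isInfix).trans hp2.isInfix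
  rcases le_or_gt (a.length + 1) s.length with h2 | h2
  · right
    have hs : f ++ t <:+ a ++ x :: b := ⟨s, by simpa [List.append_assoc] using hst⟩
    have hb : b <:+ a ++ x :: b := ⟨a ++ [x], by simp⟩
    have hlen : s.length + (f.length + t.length) = a.length + (b.length + 1) := by
      have := congrArg List.length hst
      simpa [List.length_append, Nat.add_assoc] using this
    have hs2 : f ++ t <:+ b :=
      List.suffix_of_suffix_length_le hs hb (by simp only [List.length_append]; omega)
    exact ((List.prefix_append f t).isInfix).trans hs2.isInfix
  · exfalso
    apply hx
    have hlen : s.length + (f.length + t.length) = a.length + (b.length + 1) := by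
      have := congrArg List.length hst
      simpa [List.length_append, Nat.add_assoc] using this
    have hfl : a.length - s.length < f.length := by omega
    have h3 : (s ++ f ++ t)[a.length]? = some x := by
      rw [hst, List.getElem?_append_right (le_refl _)]
      simp
    rw [List.append_assoc, List.getElem?_append_right (by omega),
        List.getElem?_append_left (by omega)] at h3
    exact List.mem_of_getElem? h3

theorem mainW (k n i : ℕ) (hi : 1 ≤ i) (hin : i ≤ n) (f : List ℕ)
    (hf : f <:+: W k n) (hsub : ∀ c ∈ f, c ≤ i) : f.count i ≤ k := by
  match k, n with
  | 0, n =>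
    rw [show W 0 n = [] from by simp [W]] at hf
    simp [List.eq_nil_of_infix_nil hf]
  | k+1, 0 => omega
  | k+1, n+1 =>
    rw [W] at hf
    rcases Nat.lt_or_ge i (n+1) with hlt | hge
    · have hx : (n+1) ∉ f := fun h => by have := hsub _ h; omega
      rcases infix_split hf hx with h | h
      · exact mainW (k+1) n i hi (by omega) f h hsub
      · exact (mainW k (n+1) i hi hin f h hsub).trans (Nat.le_succ k)
    · have hieq : i = n+1 := by omega
      subst hieq
      calc f.count (n+1) ≤ (W (k+1) (n+1)).count (n+1) := by
            have : f <:+: W (k+1) (n+1) := by rw [W]; exact hf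
            exact this.sublist.count_le _
        _ = k+1 := countW (k+1) n
termination_by k + n

/-- Every factor of `W_{k,n}` over the subalphabet `{a_1, ..., a_i}` contains at
most `k` occurrences of `a_i`; i.e. `W_{k,n}` has no factor containing `k+1`
occurrences of `a_i` interleaved only with letters `a_j`, `j < i`. -/
theorem stmt_4 (k n : ℕ) (hk : 1 ≤ k) (hn : 1 ≤ n) (i : ℕ) (hi : 1 ≤ i)
    (hin : i ≤ n) (f : List ℕ) (hf : f <:+: W k n) (hsub : ∀ c ∈ f, c ≤ i) :
    f.count i ≤ k :=
  mainW k n i hi hin f hf hsub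
end

section
/- For all positive integers k and n with k, n ≥ 1, there exists a complete, partially ordered, self-loop deterministic and confluent NFA (ptNFA) A_{k,n} over the n-letter alphabet {a_1,...,a_n} with exactly n(2k+1)+1 states whose language is Σ_n* \ {W_{k,n}}, i.e., it accepts every word except the single word W_{k,n} of length binomial(k+n,n) - 1. -/
/-- Reachability between states of an NFA: `p ≤ q` iff `q ∈ p·w` for some word `w`. -/
def nfaReach {α σ : Type*} (M : NFA α σ) (p q : σ) : Prop :=
  ∃ w : List α, q ∈ M.evalFrom {p} w

/-- An NFA is partially ordered (a poNFA) if reachability is a partial order,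
equivalently (reflexivity and transitivity being automatic) antisymmetric. -/
def PartiallyOrderedNFA {α σ : Type*} (M : NFA α σ) : Prop :=
  ∀ p q, nfaReach M p q → nfaReach M q p → p = q

/-- An NFA is complete if every state has a transition under every letter. -/
def CompleteNFA {α σ : Type*} (M : NFA α σ) : Prop :=
  ∀ q a, (M.step q a).Nonempty

/-- Self-loop determinism: if `q ∈ q·a` then `q·a = {q}`. -/
def SelfLoopDet {α σ : Type*} (M : NFA α σ) : Prop :=
  ∀ q a, q ∈ M.step q a → M.step q a = {q}

/-- Confluence: for every state `q` and letters `a, b`, any `s ∈ q·a`, `t ∈ q·b`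
can be joined: there is `w ∈ {a,b}*` with `s·w ∩ t·w ≠ ∅`. -/
def ConfluentNFA {α σ : Type*} (M : NFA α σ) : Prop :=
  ∀ q (a b : α), ∀ s ∈ M.step q a, ∀ t ∈ M.step q b,
    ∃ w : List α, (∀ c ∈ w, c = a ∨ c = b) ∧
      (M.evalFrom {s} w ∩ M.evalFrom {t} w).Nonempty

/-- The self-loop alphabet `Σ(q) = {a : q ∈ q·a}` of a state `q`. -/
def slAlph {α σ : Type*} (M : NFA α σ) (q : σ) : Set α := {a | q ∈ M.step q a}

/-- One-step edge relation of the graph `G(M, Γ)` of transitions labeled in `Γ`. -/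
def stepRel {α σ : Type*} (M : NFA α σ) (Γ : Set α) (p q : σ) : Prop :=
  ∃ a ∈ Γ, q ∈ M.step p a

/-- Reachability in the graph `G(M, Γ)`. -/
def reachIn {α σ : Type*} (M : NFA α σ) (Γ : Set α) : σ → σ → Prop :=
  Relation.ReflTransGen (stepRel M Γ)

/-- Being in the same (weakly) connected component of `G(M, Γ)`. -/
def inComp {α σ : Type*} (M : NFA α σ) (Γ : Set α) : σ → σ → Prop :=
  Relation.ReflTransGen (fun p q => stepRel M Γ p q ∨ stepRel M Γ q p)

/-- `p` is a maximal state of the connected component of `G(M, Γ)` containing `q`. -/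
def MaximalInComp {α σ : Type*} (M : NFA α σ) (Γ : Set α) (q p : σ) : Prop :=
  inComp M Γ q p ∧ ∀ r, reachIn M Γ p r → r = p

/-- The unique maximal state (UMS) property: every state `q` is the unique maximal
state of the connected component of `G(M, Σ(q))` containing `q`. -/
def UMS {α σ : Type*} (M : NFA α σ) : Prop :=
  ∀ q, MaximalInComp M (slAlph M q) q q ∧ ∀ p, MaximalInComp M (slAlph M q) q p → p = q

namespace S12

/-- counter update on reading letter m -/
def upd (x : ℕ → ℕ) (m : ℕ) : ℕ → ℕ := fun j => if 1 ≤ j ∧ j ≤ m then x m - 1 else x j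

/-- precondition for reading letter m (letters range over 1..n) -/
def Pre (n : ℕ) (x : ℕ → ℕ) (m : ℕ) : Prop :=
  1 ≤ m ∧ m ≤ n ∧ (∀ j, 1 ≤ j → j < m → x j = 0) ∧ 1 ≤ x m

inductive MRun (n : ℕ) : (ℕ → ℕ) → List ℕ → (ℕ → ℕ) → Prop
  | nil (x) : MRun n x [] x
  | cons {x m w z} : Pre n x m → MRun n (upd x m) w z → MRun n x (m :: w) z

def zer (i : ℕ) (x : ℕ → ℕ) : ℕ → ℕ := fun l => if 1 ≤ l ∧ l ≤ i then 0 else x l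

theorem MRun.append {n x u y v z} (h1 : MRun n x u y) (h2 : MRun n y v z) :
    MRun n x (u ++ v) z := by
  induction h1 with
  | nil => simpa using h2
  | cons hp _ ih => exact .cons hp (ih h2)

theorem W_zero (i : ℕ) : W 0 i = [] := by rw [W]
theorem W_szero (j : ℕ) : W (j+1) 0 = [] := by rw [W]
theorem W_succ (j i : ℕ) : W (j+1) (i+1) = W (j+1) i ++ (i+1) :: W j (i+1) := by rw [W]

theorem runW (n : ℕ) : ∀ j i (x : ℕ → ℕ), i ≤ n → (∀ l, 1 ≤ l → l ≤ i → x l = j) →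
    MRun n x (W j i) (zer i x) := by
  intro j
  induction j with
  | zero =>
    intro i x _ hx
    rw [W_zero]
    have : zer i x = x := by
      funext l; unfold zer; split
      · next h => exact (hx l h.1 h.2).symm
      · rfl
    rw [this]; exact .nil x
  | succ j ihj =>
    intro i
    induction i with
    | zero =>
      intro x _ _
      rw [W_szero]
      have : zer 0 x = x := by
        funext l; unfold zer; split
        · next h => omega
        · rfl
      rw [this]; exact .nil x
    | succ i ihi =>
      intro x hin hx
      rw [W_succ]
      have h1 : MRun n x (W (j+1) i) (zer i x) :=
        ihi x (by omega) (fun l hl1 hl2 => hx l hl1 (by omega))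
      refine h1.append ?_
      have hpre : Pre n (zer i x) (i+1) := by
        refine ⟨by omega, hin, fun l h1 h2 => ?_, ?_⟩
        · unfold zer; split
          · rfl
          · omega
        · unfold zer; split
          · omega
          · rw [hx (i+1) (by omega) (by omega)]; omega
      refine .cons hpre ?_
      have hy : ∀ l, 1 ≤ l → l ≤ i + 1 → upd (zer i x) (i+1) l = j := by
        intro l h1 h2
        unfold upd; split
        · unfold zer; split
          · omega
          · rw [hx (i+1) (by omega) (by omega)]; omega
        · omega
      have h3 := ihj (i+1) (upd (zer i x) (i+1)) hin hy
      have : zer (i+1) (upd (zer i x) (i+1)) = zer (i+1) x := by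
        funext l; simp only [zer, upd]
        split
        · rfl
        · split
          · omega
          · rfl
      rwa [this] at h3

end S12

namespace S12

def Zn (n : ℕ) (z : ℕ → ℕ) : Prop := ∀ l, 1 ≤ l → l ≤ n → z l = 0

theorem uniq {n : ℕ} : ∀ (w w' : List ℕ) (x z z' : ℕ → ℕ),
    MRun n x w z → Zn n z → MRun n x w' z' → Zn n z' → w = w' := by
  intro w
  induction w with
  | nil =>
    intro w' x z z' h hz h' hz'
    cases h
    cases h' with
    | nil => rfl
    | cons hp _ =>
      obtain ⟨h1, h2, _, h4⟩ := hp
      have := hz _ h1 h2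
      omega
  | cons m w ih =>
    intro w' x z z' h hz h' hz'
    cases h with
    | cons hp hrest =>
      cases h' with
      | nil =>
        obtain ⟨h1, h2, _, h4⟩ := hp
        have := hz' _ h1 h2
        omega
      | @cons _ m' w'' _ hp' hrest' =>
        have hmm : m = m' := by
          rcases Nat.lt_trichotomy m m' with h | h | h
          · have := hp'.2.2.1 m hp.1 h
            have := hp.2.2.2
            omega
          · exact h
          · have := hp.2.2.1 m' hp'.1 h
            have := hp'.2.2.2
            omega
        subst hmm
        rw [ih w'' _ _ _ hrest hz hrest' hz']

def MAcc (k n : ℕ) (w : List ℕ) : Prop := ∃ z, MRun n (fun _ => k) w z ∧ Zn n z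

theorem MAcc_W (k n : ℕ) : MAcc k n (W k n) := by
  refine ⟨zer n (fun _ => k), runW n k n _ le_rfl (fun _ _ _ => rfl), ?_⟩
  intro l h1 h2
  unfold zer
  split
  · rfl
  · omega

theorem MAcc_unique {k n : ℕ} {w : List ℕ} (h : MAcc k n w) : w = W k n := by
  obtain ⟨z, hr, hz⟩ := h
  obtain ⟨z', hr', hz'⟩ := MAcc_W k n
  exact uniq _ _ _ _ _ hr hz hr' hz'

def Inv (k n : ℕ) (x : ℕ → ℕ) : Prop :=
  (∀ l, 1 ≤ l → l ≤ n → x l ≤ k) ∧ ∀ l l', 1 ≤ l → l ≤ l' → l' ≤ n → x l ≤ x l'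

theorem Inv_upd {k n : ℕ} {x : ℕ → ℕ} {m : ℕ} (h : Inv k n x) (hp : Pre n x m) :
    Inv k n (upd x m) := by
  obtain ⟨hb, hm⟩ := h
  obtain ⟨h1, h2, _, h4⟩ := hp
  constructor
  · intro l hl1 hl2
    unfold upd; split
    · have := hb m h1 h2; omega
    · exact hb l hl1 hl2
  · intro l l' hl1 hll' hl'
    unfold upd
    split <;> split
    · omega
    · next hA hB =>
      have : m < l' := by omega
      have := hm m l' h1 (by omega) hl'
      omega
    · omega
    · exact hm l l' hl1 hll' hl'

theorem Inv_run {k n : ℕ} {x w z} (h : MRun n x w z) (hx : Inv k n x) : Inv k n z := by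
  induction h with
  | nil => exact hx
  | cons hp _ ih => exact ih (Inv_upd hx hp)

theorem Inv_const (k n : ℕ) : Inv k n (fun _ => k) := ⟨fun _ _ _ => le_rfl, fun _ _ _ _ _ => le_rfl⟩

end S12

namespace S12

abbrev Ltr (n : ℕ) := {a : ℕ // 1 ≤ a ∧ a ≤ n}
abbrev St (k n : ℕ) := Option (Fin n × Fin (2*k+1))

def mk (k n r c : ℕ) : St k n :=
  if h : 1 ≤ r ∧ r ≤ n ∧ c ≤ 2*k then some (⟨r-1, by omega⟩, ⟨c, by omega⟩) else none

theorem mk_def {k n r c : ℕ} (h1 : 1 ≤ r) (h2 : r ≤ n) (h3 : c ≤ 2*k) :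
    mk k n r c = some (⟨r-1, by omega⟩, ⟨c, by omega⟩) := by
  unfold mk; rw [dif_pos ⟨h1, h2, h3⟩]

theorem mk_ne_none {k n r c : ℕ} (h1 : 1 ≤ r) (h2 : r ≤ n) (h3 : c ≤ 2*k) :
    mk k n r c ≠ none := by rw [mk_def h1 h2 h3]; simp

theorem some_eq_mk {k n : ℕ} (i : Fin n) (j : Fin (2*k+1)) :
    (some (i, j) : St k n) = mk k n (i.1+1) j.1 := by
  have h1 : (1:ℕ) ≤ i.1+1 := by omega
  have h2 : i.1+1 ≤ n := i.2
  have h3 : j.1 ≤ 2*k := by have := j.2; omega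
  rw [mk_def h1 h2 h3]
  simp

theorem mk_inj {k n r c r' c' : ℕ} (h1 : 1 ≤ r) (h2 : r ≤ n) (h3 : c ≤ 2*k)
    (h1' : 1 ≤ r') (h2' : r' ≤ n) (h3' : c' ≤ 2*k) (h : mk k n r c = mk k n r' c') :
    r = r' ∧ c = c' := by
  rw [mk_def h1 h2 h3, mk_def h1' h2' h3'] at h
  simp only [Option.some.injEq, Prod.mk.injEq, Fin.mk.injEq] at h
  omega

/-- transition sets, for a state in row `r` (1-based), column `c`, reading letter `m`. -/
def T (k n r c m : ℕ) : Set (St k n) :=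
  if c ≤ k then
    if m < r then {mk k n r c}
    else if m = r then
      (if c < k then {q | ∃ l, 1 ≤ l ∧ l ≤ r ∧ q = mk k n l (c+1)} else {none})
    else if c < k then {none}
    else if m = r + 1 then {mk k n r (k+1)}
    else {mk k n (m-1) (k+1)}
  else
    if r = n then (if m < n then {mk k n r c} else {none})
    else if m ≤ r then {mk k n r c}
    else if m = r + 1 then (if c < 2*k then {mk k n r (c+1)} else {none})
    else {mk k n (m-1) (k+1)}

def Ak (k n : ℕ) : NFA (Ltr n) (St k n) where
  step q a := match q with
    | none => {none}
    | some (i, j) => T k n (i.1+1) j.1 a.1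
  start := {q | ∃ i, 1 ≤ i ∧ i ≤ n ∧ q = mk k n i 0}
  accept := {q | q = none ∨ ∃ i j, q = some (i, j) ∧ j.1 < k}

theorem step_none {k n : ℕ} (a : Ltr n) : (Ak k n).step none a = {none} := rfl

theorem step_some {k n : ℕ} (i : Fin n) (j : Fin (2*k+1)) (a : Ltr n) :
    (Ak k n).step (some (i,j)) a = T k n (i.1+1) j.1 a.1 := rfl

theorem card_St (k n : ℕ) : Fintype.card (St k n) = n * (2*k+1) + 1 := by
  simp [St, Fintype.card_option, Fintype.card_prod]

end S12

namespace S12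

def rank (k n : ℕ) : St k n → ℕ
  | none => n*(k+1) + n*k + 5
  | some (i, j) => if j.1 ≤ k then (n - (i.1+1))*(k+1) + j.1 else n*(k+1) + i.1*k + (j.1 - (k+1))

theorem rank_mk {k n r c : ℕ} (h1 : 1 ≤ r) (h2 : r ≤ n) (h3 : c ≤ 2*k) :
    rank k n (mk k n r c) =
      if c ≤ k then (n - r)*(k+1) + c else n*(k+1) + (r-1)*k + (c-(k+1)) := by
  rw [mk_def h1 h2 h3]
  simp only [rank]
  have hr : r - 1 + 1 = r := by omega
  rw [hr]

theorem rank_mk_up {k n r c : ℕ} (h1 : 1 ≤ r) (h2 : r ≤ n) (h3 : c ≤ k) :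
    rank k n (mk k n r c) = (n - r)*(k+1) + c := by
  rw [rank_mk h1 h2 (by omega), if_pos h3]

theorem rank_mk_post {k n r c : ℕ} (h1 : 1 ≤ r) (h2 : r ≤ n) (h3 : c ≤ 2*k) (h4 : k < c) :
    rank k n (mk k n r c) = n*(k+1) + (r-1)*k + (c-(k+1)) := by
  rw [rank_mk h1 h2 h3, if_neg (by omega)]

theorem rank_lt_none {k n : ℕ} (hn : 1 ≤ n) (q : St k n) (hq : q ≠ none) :
    rank k n q < rank k n none := by
  match q with
  | none => exact absurd rfl hq
  | some (i, j) =>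
    simp only [rank]
    have hi : i.1 + 1 ≤ n := i.2
    have hj : j.1 ≤ 2*k := by have := j.2; omega
    have e1 : (n - (i.1+1)) * (k+1) ≤ n * (k+1) := Nat.mul_le_mul_right _ (by omega)
    have e2 : (i.1+1) * k ≤ n * k := Nat.mul_le_mul_right _ (by omega)
    have e2a : (i.1+1) * k = i.1*k + k := by ring
    have e3 : 1*k ≤ n*k := Nat.mul_le_mul_right _ hn
    split <;> omega

end S12

namespace S12

theorem rank_lt {k n : ℕ} (hk : 1 ≤ k) (q : St k n) (a : Ltr n) (q' : St k n)
    (h : q' ∈ (Ak k n).step q a) : q' = q ∨ rank k n q < rank k n q' := by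
  obtain ⟨hm1, hm2⟩ := a.2
  have hn : 1 ≤ n := le_trans hm1 hm2
  match q with
  | none =>
    rw [step_none] at h
    exact Or.inl h
  | some (i, j) =>
    rw [step_some] at h
    have hr1 : (1:ℕ) ≤ i.1 + 1 := by omega
    have hr2 : i.1 + 1 ≤ n := i.2
    have hc2 : j.1 ≤ 2*k := by have := j.2; omega
    have hqmk : (some (i,j) : St k n) = mk k n (i.1+1) j.1 := some_eq_mk i j
    have hnone : rank k n (some (i,j)) < rank k n (none : St k n) :=
      rank_lt_none hn _ (by simp)
    unfold T at h
    split_ifs at h with h1 h2 h3 h4 h5 h6 h7 h8 h9 h10 h11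
    · -- up, m < r : self
      simp only [Set.mem_singleton_iff] at h
      left; rw [h, hqmk]
    · -- spawn
      simp only [Set.mem_setOf_eq] at h
      obtain ⟨l, hl1, hl2, hq'⟩ := h
      right
      rw [hq', hqmk, rank_mk_up hr1 hr2 h1, rank_mk_up hl1 (by omega) (by omega)]
      have e : (n - (i.1+1))*(k+1) ≤ (n - l)*(k+1) := Nat.mul_le_mul_right _ (by omega)
      omega
    · simp only [Set.mem_singleton_iff] at h
      right; rw [h]; exact hnone
    · simp only [Set.mem_singleton_iff] at h
      right; rw [h]; exact hnone
    · -- up c=k, m=r+1 : post entry (r, k+1)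
      simp only [Set.mem_singleton_iff] at h
      right
      rw [h, hqmk, rank_mk_up hr1 hr2 h1, rank_mk_post hr1 hr2 (by omega) (by omega)]
      have e1 : (n - (i.1+1) + 1) * (k+1) ≤ n * (k+1) := Nat.mul_le_mul_right _ (by omega)
      have e2 : (n - (i.1+1) + 1) * (k+1) = (n-(i.1+1))*(k+1) + (k+1) := by ring
      omega
    · -- up c=k, m>r+1 : handoff (m-1, k+1)
      simp only [Set.mem_singleton_iff] at h
      right
      rw [h, hqmk, rank_mk_up hr1 hr2 h1,
        rank_mk_post (by omega) (by omega) (by omega) (by omega)]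
      have e1 : (n - (i.1+1) + 1) * (k+1) ≤ n * (k+1) := Nat.mul_le_mul_right _ (by omega)
      have e2 : (n - (i.1+1) + 1) * (k+1) = (n-(i.1+1))*(k+1) + (k+1) := by ring
      omega
    · -- post r=n, m<n : self
      simp only [Set.mem_singleton_iff] at h
      left; rw [h, hqmk]
    · simp only [Set.mem_singleton_iff] at h
      right; rw [h]; exact hnone
    · -- post, m ≤ r : self
      simp only [Set.mem_singleton_iff] at h
      left; rw [h, hqmk]
    · -- post chain (r, c+1)
      simp only [Set.mem_singleton_iff] at h
      right
      rw [h, hqmk, rank_mk_post hr1 hr2 hc2 (by omega),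
        rank_mk_post hr1 hr2 (by omega) (by omega)]
      omega
    · simp only [Set.mem_singleton_iff] at h
      right; rw [h]; exact hnone
    · -- post handoff (m-1, k+1)
      simp only [Set.mem_singleton_iff] at h
      right
      rw [h, hqmk, rank_mk_post hr1 hr2 hc2 (by omega),
        rank_mk_post (by omega) (by omega) (by omega) (by omega)]
      have e1 : (i.1+1) * k ≤ (a.1 - 1 - 1) * k := Nat.mul_le_mul_right _ (by omega)
      have e2 : (i.1+1) * k = i.1*k + k := by ring
      have e3 : (i.1+1) - 1 = i.1 := by omega
      rw [e3]
      omega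

end S12

namespace S12

theorem complete (k n : ℕ) (hk : 1 ≤ k) : CompleteNFA (Ak k n) := by
  intro q a
  match q with
  | none => exact ⟨none, rfl⟩
  | some (i, j) =>
    rw [step_some]
    unfold T
    split_ifs <;>
      first
        | exact ⟨_, rfl⟩
        | exact ⟨mk k n (i.1+1) (j.1+1), ⟨i.1+1, by omega, le_rfl, rfl⟩⟩

theorem sld (k n : ℕ) (hk : 1 ≤ k) : SelfLoopDet (Ak k n) := by
  intro q a hq
  obtain ⟨hm1, hm2⟩ := a.2
  match q with
  | none => rfl
  | some (i, j) =>
    have hr1 : (1:ℕ) ≤ i.1 + 1 := by omega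
    have hr2 : i.1 + 1 ≤ n := i.2
    have hc2 : j.1 ≤ 2*k := by have := j.2; omega
    have hqmk : (some (i,j) : St k n) = mk k n (i.1+1) j.1 := some_eq_mk i j
    rw [step_some] at hq ⊢
    unfold T at hq ⊢
    split_ifs at hq ⊢ with h1 h2 h3 h4 h5 h6 h7 h8 h9 h10 h11
    all_goals first
      | (exact congrArg (fun s => ({s} : Set (St k n))) hqmk.symm)
      | (exfalso; rw [Set.mem_singleton_iff] at hq; exact absurd hq (Option.some_ne_none _))
      | (exfalso; simp only [Set.mem_singleton_iff] at hq;
         rw [hqmk] at hq;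
         rcases mk_inj hr1 hr2 hc2 (by omega) (by omega) (by omega) hq with ⟨e1, e2⟩; omega)
      | (exfalso; simp only [Set.mem_setOf_eq] at hq;
         obtain ⟨l, hl1, hl2, hql⟩ := hq;
         rw [hqmk] at hql;
         rcases mk_inj hr1 hr2 hc2 hl1 (by omega) (by omega) hql with ⟨e1, e2⟩; omega)

theorem evalFrom_rank {k n : ℕ} (hk : 1 ≤ k) :
    ∀ (w : List (Ltr n)) (S : Set (St k n)) (q' : St k n), q' ∈ (Ak k n).evalFrom S w →
      ∃ p ∈ S, p = q' ∨ rank k n p < rank k n q' := by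
  intro w
  induction w with
  | nil => intro S q' h; exact ⟨q', h, Or.inl rfl⟩
  | cons a w ih =>
    intro S q' h
    have h' : q' ∈ (Ak k n).evalFrom ((Ak k n).stepSet S a) w := h
    obtain ⟨p1, hp1, hd1⟩ := ih _ _ h'
    rw [NFA.mem_stepSet] at hp1
    obtain ⟨p, hp, hstep⟩ := hp1
    rcases rank_lt hk p a p1 hstep with h2 | h2
    · rw [h2] at hd1; exact ⟨p, hp, hd1⟩
    · refine ⟨p, hp, Or.inr ?_⟩
      rcases hd1 with h3 | h3
      · rwa [h3] at h2
      · omega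

theorem po (k n : ℕ) (hk : 1 ≤ k) : PartiallyOrderedNFA (Ak k n) := by
  intro p q hpq hqp
  obtain ⟨w1, h1⟩ := hpq
  obtain ⟨w2, h2⟩ := hqp
  obtain ⟨p', hp', hd1⟩ := evalFrom_rank hk w1 _ _ h1
  obtain ⟨q', hq', hd2⟩ := evalFrom_rank hk w2 _ _ h2
  simp only [Set.mem_singleton_iff] at hp' hq'
  subst hp'; subst hq'
  rcases hd1 with h | h
  · exact h
  · rcases hd2 with h' | h'
    · exact h'.symm
    · omega

end S12

namespace S12

theorem maximal_self {k n : ℕ} (hk : 1 ≤ k) (q : St k n) :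
    ∀ r, reachIn (Ak k n) (slAlph (Ak k n) q) q r → r = q := by
  intro r h
  induction h with
  | refl => rfl
  | tail _ hstep ih =>
    rename_i b c _
    rw [ih] at hstep
    obtain ⟨a, ha, hc⟩ := hstep
    rw [sld k n hk q a ha] at hc
    exact hc

/-- labels of self-loops of a `some` state are small -/
theorem slAlph_some {k n : ℕ} (hk : 1 ≤ k) (i : Fin n) (j : Fin (2*k+1)) (a : Ltr n)
    (h : a ∈ slAlph (Ak k n) (some (i,j))) :
    a.1 ≤ i.1 + 1 ∧ (j.1 ≤ k → a.1 ≤ i.1) := by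
  obtain ⟨hm1, hm2⟩ := a.2
  have hr1 : (1:ℕ) ≤ i.1 + 1 := by omega
  have hr2 : i.1 + 1 ≤ n := i.2
  have hc2 : j.1 ≤ 2*k := by have := j.2; omega
  have hqmk : (some (i,j) : St k n) = mk k n (i.1+1) j.1 := some_eq_mk i j
  have hq : some (i,j) ∈ (Ak k n).step (some (i,j)) a := h
  rw [step_some] at hq
  unfold T at hq
  split_ifs at hq with h1 h2 h3 h4 h5 h6 h7 h8 h9 h10 h11
  all_goals first
    | (constructor <;> omega)
    | (exfalso; rw [Set.mem_singleton_iff] at hq; exact absurd hq (Option.some_ne_none _))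
    | (exfalso; simp only [Set.mem_singleton_iff] at hq;
       rw [hqmk] at hq;
       rcases mk_inj hr1 hr2 hc2 (by omega) (by omega) (by omega) hq with ⟨e1, e2⟩; omega)
    | (exfalso; simp only [Set.mem_setOf_eq] at hq;
       obtain ⟨l, hl1, hl2, hql⟩ := hq;
       rw [hqmk] at hql;
       rcases mk_inj hr1 hr2 hc2 hl1 (by omega) (by omega) hql with ⟨e1, e2⟩; omega)

/-- entries into a `some` state from elsewhere have large labels -/
theorem entry_big {k n : ℕ} (hk : 1 ≤ k) (p : St k n) (a : Ltr n) (i : Fin n)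
    (j : Fin (2*k+1)) (hmem : (some (i,j) : St k n) ∈ (Ak k n).step p a)
    (hne : (some (i,j) : St k n) ≠ p) :
    (j.1 ≤ k → i.1 + 1 ≤ a.1) ∧ (k < j.1 → i.1 + 2 ≤ a.1) := by
  obtain ⟨hm1, hm2⟩ := a.2
  match p with
  | none =>
    rw [step_none] at hmem
    exact absurd hmem (by simp)
  | some (i', j') =>
    have hr1 : (1:ℕ) ≤ i'.1 + 1 := by omega
    have hr2 : i'.1 + 1 ≤ n := i'.2
    have hc2 : j'.1 ≤ 2*k := by have := j'.2; omega
    have hqmk : (some (i,j) : St k n) = mk k n (i.1+1) j.1 := some_eq_mk i j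
    have hr1' : (1:ℕ) ≤ i.1 + 1 := by omega
    have hr2' : i.1 + 1 ≤ n := i.2
    have hc2' : j.1 ≤ 2*k := by have := j.2; omega
    rw [step_some] at hmem
    unfold T at hmem
    split_ifs at hmem with h1 h2 h3 h4 h5 h6 h7 h8 h9 h10 h11
    all_goals first
      | (exfalso; rw [Set.mem_singleton_iff] at hmem; exact absurd hmem (Option.some_ne_none _))
      | (rw [Set.mem_singleton_iff] at hmem;
         exact absurd (hmem.trans (some_eq_mk i' j').symm) hne)
      | (rw [Set.mem_singleton_iff, hqmk] at hmem;
         rcases mk_inj hr1' hr2' hc2' (by omega) (by omega) (by omega) hmem with ⟨e1, e2⟩;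
         constructor <;> omega)
      | (simp only [Set.mem_setOf_eq] at hmem;
         obtain ⟨l, hl1, hl2, hql⟩ := hmem;
         rw [hqmk] at hql;
         rcases mk_inj hr1' hr2' hc2' hl1 (by omega) (by omega) hql with ⟨e1, e2⟩;
         constructor <;> omega)

theorem comp_single {k n : ℕ} (hk : 1 ≤ k) (i : Fin n) (j : Fin (2*k+1)) :
    ∀ p, inComp (Ak k n) (slAlph (Ak k n) (some (i,j))) (some (i,j)) p → p = some (i,j) := by
  intro p h
  induction h with
  | refl => rfl
  | tail _ hstep ih =>
    rename_i b c _
    rw [ih] at hstep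
    rcases hstep with ⟨a, ha, hc⟩ | ⟨a, ha, hc⟩
    · have := sld k n hk (some (i,j)) a ha
      rw [this] at hc
      exact hc
    · by_cases hq : c = some (i,j)
      · exact hq
      · exfalso
        have hb := entry_big hk c a i j hc (fun hx => hq hx.symm)
        have hs := slAlph_some hk i j a ha
        have := j.2
        rcases le_or_gt j.1 k with hjk | hjk
        · have := hb.1 hjk
          have := hs.2 hjk
          omega
        · have := hb.2 hjk
          have := hs.1
          omega

theorem escape {k n : ℕ} (hk : 1 ≤ k) (i : Fin n) (j : Fin (2*k+1)) :
    ∃ (a : Ltr n) (r : St k n), r ∈ (Ak k n).step (some (i,j)) a ∧ r ≠ some (i,j) := by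
  have hr1 : (1:ℕ) ≤ i.1 + 1 := by omega
  have hr2 : i.1 + 1 ≤ n := i.2
  have hc2 : j.1 ≤ 2*k := by have := j.2; omega
  have hn : 1 ≤ n := by omega
  by_cases hjk : j.1 ≤ k
  · -- up state: letter a = row
    refine ⟨⟨i.1+1, hr1, hr2⟩, ?_⟩
    by_cases hjk2 : j.1 < k
    · refine ⟨mk k n (i.1+1) (j.1+1), ?_, ?_⟩
      · rw [step_some]
        show mk k n (i.1+1) (j.1+1) ∈ T k n (i.1+1) j.1 (i.1+1)
        unfold T
        rw [if_pos hjk, if_neg (show ¬(i.1+1 < i.1+1) by omega), if_pos rfl, if_pos hjk2]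
        exact ⟨i.1+1, hr1, le_rfl, rfl⟩
      · rw [some_eq_mk]
        intro hx
        rcases mk_inj hr1 hr2 (by omega) hr1 hr2 hc2 hx with ⟨e1, e2⟩; omega
    · refine ⟨none, ?_, by simp⟩
      rw [step_some]
      show (none : St k n) ∈ T k n (i.1+1) j.1 (i.1+1)
      unfold T
      rw [if_pos hjk, if_neg (show ¬(i.1+1 < i.1+1) by omega), if_pos rfl, if_neg hjk2]
      rfl
  · by_cases hin : i.1 + 1 = n
    · -- pad row n: letter n
      refine ⟨⟨n, hn, le_rfl⟩, none, ?_, by simp⟩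
      rw [step_some]
      show (none : St k n) ∈ T k n (i.1+1) j.1 n
      unfold T
      rw [if_neg hjk, if_pos hin, if_neg (show ¬(n < n) by omega)]
      rfl
    · -- post row < n: letter r+1
      have hrn : i.1 + 1 + 1 ≤ n := by omega
      refine ⟨⟨i.1+1+1, by omega, hrn⟩, ?_⟩
      by_cases hj2 : j.1 < 2*k
      · refine ⟨mk k n (i.1+1) (j.1+1), ?_, ?_⟩
        · rw [step_some]
          show mk k n (i.1+1) (j.1+1) ∈ T k n (i.1+1) j.1 (i.1+1+1)
          unfold T
          rw [if_neg hjk, if_neg hin, if_neg (show ¬(i.1+1+1 ≤ i.1+1) by omega),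
            if_pos rfl, if_pos hj2]
          rfl
        · rw [some_eq_mk]
          intro hx
          rcases mk_inj hr1 hr2 (by omega) hr1 hr2 hc2 hx with ⟨e1, e2⟩; omega
      · refine ⟨none, ?_, by simp⟩
        rw [step_some]
        show (none : St k n) ∈ T k n (i.1+1) j.1 (i.1+1+1)
        unfold T
        rw [if_neg hjk, if_neg hin, if_neg (show ¬(i.1+1+1 ≤ i.1+1) by omega),
          if_pos rfl, if_neg hj2]
        rfl

theorem ums (k n : ℕ) (hk : 1 ≤ k) : UMS (Ak k n) := by
  intro q
  refine ⟨⟨Relation.ReflTransGen.refl, maximal_self hk q⟩, ?_⟩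
  intro p hp
  obtain ⟨hcomp, hmax⟩ := hp
  match q with
  | none =>
    match p with
    | none => rfl
    | some (i, j) =>
      exfalso
      obtain ⟨a, r, hr, hne⟩ := escape hk i j
      have hstep : stepRel (Ak k n) (slAlph (Ak k n) (none : St k n)) (some (i,j)) r :=
        ⟨a, rfl, hr⟩
      have := hmax r (Relation.ReflTransGen.single hstep)
      exact hne this
  | some (i, j) => exact comp_single hk i j p hcomp
end S12

namespace S12

theorem evalFrom_app {k n : ℕ} (S : Set (St k n)) (u v : List (Ltr n)) :
    (Ak k n).evalFrom S (u ++ v) = (Ak k n).evalFrom ((Ak k n).evalFrom S u) v := by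
  simp [NFA.evalFrom, List.foldl_append]

theorem stepSet_single {k n : ℕ} (q : St k n) (a : Ltr n) :
    (Ak k n).stepSet {q} a = (Ak k n).step q a := by
  simp [NFA.stepSet]

theorem evalFrom_mono {k n : ℕ} {S S' : Set (St k n)} (h : S ⊆ S') (w : List (Ltr n)) :
    (Ak k n).evalFrom S w ⊆ (Ak k n).evalFrom S' w := by
  induction w generalizing S S' with
  | nil => exact h
  | cons a w ih =>
    refine ih ?_
    intro x hx
    rw [NFA.mem_stepSet] at hx ⊢
    obtain ⟨t, ht, hxt⟩ := hx
    exact ⟨t, h ht, hxt⟩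

theorem none_persist {k n : ℕ} {S : Set (St k n)} (h : (none : St k n) ∈ S)
    (w : List (Ltr n)) : (none : St k n) ∈ (Ak k n).evalFrom S w := by
  induction w generalizing S with
  | nil => exact h
  | cons a w ih =>
    refine ih ?_
    rw [NFA.mem_stepSet]
    exact ⟨none, h, rfl⟩

theorem evalFrom_rep_self {k n : ℕ} (hk : 1 ≤ k) {q : St k n} {a : Ltr n}
    (h : q ∈ (Ak k n).step q a) (N : ℕ) :
    (Ak k n).evalFrom {q} (List.replicate N a) = {q} := by
  induction N with
  | zero => rfl
  | succ N ih =>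
    rw [List.replicate_succ]
    show (Ak k n).evalFrom ((Ak k n).stepSet {q} a) (List.replicate N a) = {q}
    rw [stepSet_single, sld k n hk q a h]
    exact ih

/-- a state does not self-loop on big letters -/
theorem no_self_big {k n : ℕ} (hk : 1 ≤ k) (q : St k n) (i : Fin n) (j : Fin (2*k+1))
    (hq : q = some (i,j)) (R C : ℕ) (hR : i.1 + 1 = R) (hC : j.1 = C) (a : Ltr n)
    (hcond : (C ≤ k ∧ R ≤ a.1) ∨ (k < C ∧ a.1 = R + 1)) :
    q ∉ (Ak k n).step q a := by
  intro hmem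
  rw [hq] at hmem
  have := slAlph_some hk i j a hmem
  rcases hcond with ⟨h1, h2⟩ | ⟨h1, h2⟩
  · have := this.2 (by omega)
    omega
  · have := this.1
    omega

/-- a non-self target of an `a`-step is either `none` or moves on `a` -/
theorem target_moves {k n : ℕ} (hk : 1 ≤ k) (q : St k n) (a : Ltr n) (q' : St k n)
    (h : q' ∈ (Ak k n).step q a) (hne : q' ≠ q) :
    q' = none ∨ q' ∉ (Ak k n).step q' a := by
  obtain ⟨hm1, hm2⟩ := a.2
  match q with
  | none =>
    rw [step_none] at h
    exact Or.inl h
  | some (i, j) =>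
    have hr1 : (1:ℕ) ≤ i.1 + 1 := by omega
    have hr2 : i.1 + 1 ≤ n := i.2
    have hc2 : j.1 ≤ 2*k := by have := j.2; omega
    rw [step_some] at h
    unfold T at h
    split_ifs at h with h1 h2 h3 h4 h5 h6 h7 h8 h9 h10 h11
    · exact absurd (by rw [Set.mem_singleton_iff] at h; rw [h, some_eq_mk]) hne
    · -- spawn: target (l, j+1), a = i+1 ≥ l, j+1 ≤ k
      right
      simp only [Set.mem_setOf_eq] at h
      obtain ⟨l, hl1, hl2, hql⟩ := h
      rw [hql]
      refine no_self_big hk _ _ _ (mk_def hl1 (by omega) (by omega)) l (j.1+1)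
        ?_ ?_ a (Or.inl ⟨by omega, by omega⟩)
      · show l - 1 + 1 = l; omega
      · show j.1 + 1 = j.1 + 1; rfl
    · left; rw [Set.mem_singleton_iff] at h; exact h
    · left; rw [Set.mem_singleton_iff] at h; exact h
    · -- post entry (i+1, k+1), a = i+2
      right
      rw [Set.mem_singleton_iff] at h
      rw [h]
      refine no_self_big hk _ _ _ (mk_def hr1 hr2 (by omega)) (i.1+1) (k+1)
        ?_ ?_ a (Or.inr ⟨by omega, by omega⟩)
      · show i.1+1-1+1 = i.1+1; omega
      · show k+1 = k+1; rfl
    · -- handoff (a-1, k+1), a = (a-1)+1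
      right
      rw [Set.mem_singleton_iff] at h
      rw [h]
      refine no_self_big hk _ _ _ (mk_def (by omega) (by omega) (by omega)) (a.1-1) (k+1)
        ?_ ?_ a (Or.inr ⟨by omega, by omega⟩)
      · show a.1-1-1+1 = a.1-1; omega
      · show k+1 = k+1; rfl
    · exact absurd (by rw [Set.mem_singleton_iff] at h; rw [h, some_eq_mk]) hne
    · left; rw [Set.mem_singleton_iff] at h; exact h
    · exact absurd (by rw [Set.mem_singleton_iff] at h; rw [h, some_eq_mk]) hne
    · -- post chain (i+1, j+1), a = i+2
      right
      rw [Set.mem_singleton_iff] at h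
      rw [h]
      refine no_self_big hk _ _ _ (mk_def hr1 hr2 (by omega)) (i.1+1) (j.1+1)
        ?_ ?_ a (Or.inr ⟨by omega, by omega⟩)
      · show i.1+1-1+1 = i.1+1; omega
      · show j.1+1 = j.1+1; rfl
    · left; rw [Set.mem_singleton_iff] at h; exact h
    · -- post handoff (a-1, k+1)
      right
      rw [Set.mem_singleton_iff] at h
      rw [h]
      refine no_self_big hk _ _ _ (mk_def (by omega) (by omega) (by omega)) (a.1-1) (k+1)
        ?_ ?_ a (Or.inr ⟨by omega, by omega⟩)
      · show a.1-1-1+1 = a.1-1; omega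
      · show k+1 = k+1; rfl

theorem reach_none {k n : ℕ} (hk : 1 ≤ k) :
    ∀ (d : ℕ) (q : St k n) (a : Ltr n),
      rank k n none - rank k n q ≤ d → (q = none ∨ q ∉ (Ak k n).step q a) →
      ∃ N, (none : St k n) ∈ (Ak k n).evalFrom {q} (List.replicate N a) := by
  intro d
  induction d with
  | zero =>
    intro q a hd hq
    have hn : 1 ≤ n := le_trans a.2.1 a.2.2
    rcases eq_or_ne q none with h | h
    · exact ⟨0, by rw [h]; exact rfl⟩
    · have := rank_lt_none hn q h
      omega
  | succ d ih =>
    intro q a hd hq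
    have hn : 1 ≤ n := le_trans a.2.1 a.2.2
    rcases eq_or_ne q none with h | h
    · exact ⟨0, by rw [h]; exact rfl⟩
    · have hq' : q ∉ (Ak k n).step q a := hq.resolve_left h
      obtain ⟨q', hq'mem⟩ := complete k n hk q a
      have hne : q' ≠ q := fun hx => hq' (hx ▸ hq'mem)
      have hrank : rank k n q < rank k n q' := by
        rcases rank_lt hk q a q' hq'mem with h2 | h2
        · exact absurd h2 hne
        · exact h2
      have hd' : rank k n none - rank k n q' ≤ d := by
        rcases eq_or_ne q' none with h3 | h3
        · rw [h3]; omega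
        · have := rank_lt_none hn q' h3
          have := rank_lt_none hn q h
          omega
      obtain ⟨N, hN⟩ := ih q' a hd' (target_moves hk q a q' hq'mem hne)
      refine ⟨N+1, ?_⟩
      rw [List.replicate_succ]
      show (none : St k n) ∈ (Ak k n).evalFrom ((Ak k n).stepSet {q} a) (List.replicate N a)
      refine evalFrom_mono ?_ _ hN
      intro x hx
      rw [Set.mem_singleton_iff] at hx
      subst hx
      rw [NFA.mem_stepSet]
      exact ⟨q, rfl, hq'mem⟩

theorem none_in_rep {k n : ℕ} (hk : 1 ≤ k) (q : St k n) (a : Ltr n)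
    (h : q = none ∨ q ∉ (Ak k n).step q a) :
    ∃ N, ∀ N', N ≤ N' → (none : St k n) ∈ (Ak k n).evalFrom {q} (List.replicate N' a) := by
  obtain ⟨N, hN⟩ := reach_none hk (rank k n none - rank k n q) q a le_rfl h
  refine ⟨N, fun N' hN' => ?_⟩
  have : List.replicate N' a = List.replicate N a ++ List.replicate (N' - N) a := by
    rw [← List.replicate_add]
    congr 1
    omega
  rw [this, evalFrom_app]
  exact none_persist hN _

theorem confluent (k n : ℕ) (hk : 1 ≤ k) : ConfluentNFA (Ak k n) := by
  intro q a b s hs t ht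
  by_cases hqa : q ∈ (Ak k n).step q a
  · have hsq : s = q := by rw [sld k n hk q a hqa] at hs; exact hs
    by_cases hqb : q ∈ (Ak k n).step q b
    · have htq : t = q := by rw [sld k n hk q b hqb] at ht; exact ht
      exact ⟨[], by simp, q, by rw [hsq]; exact rfl, by rw [htq]; exact rfl⟩
    · -- w = replicate N b
      have hsprem : s = none ∨ s ∉ (Ak k n).step s b := by
        rw [hsq]; exact Or.inr hqb
      have htprem : t = none ∨ t ∉ (Ak k n).step t b := by
        rcases eq_or_ne t q with h | h
        · rw [h]; exact Or.inr hqb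
        · exact target_moves hk q b t ht h
      obtain ⟨N1, hN1⟩ := none_in_rep hk s b hsprem
      obtain ⟨N2, hN2⟩ := none_in_rep hk t b htprem
      refine ⟨List.replicate (max N1 N2) b, ?_, none, ?_, ?_⟩
      · intro c hc; right; exact List.eq_of_mem_replicate hc
      · exact hN1 _ (le_max_left _ _)
      · exact hN2 _ (le_max_right _ _)
  · by_cases hqb : q ∈ (Ak k n).step q b
    · have htq : t = q := by rw [sld k n hk q b hqb] at ht; exact ht
      have htprem : t = none ∨ t ∉ (Ak k n).step t a := by
        rw [htq]; exact Or.inr hqa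
      have hsprem : s = none ∨ s ∉ (Ak k n).step s a := by
        rcases eq_or_ne s q with h | h
        · rw [h]; exact Or.inr hqa
        · exact target_moves hk q a s hs h
      obtain ⟨N1, hN1⟩ := none_in_rep hk s a hsprem
      obtain ⟨N2, hN2⟩ := none_in_rep hk t a htprem
      refine ⟨List.replicate (max N1 N2) a, ?_, none, ?_, ?_⟩
      · intro c hc; left; exact List.eq_of_mem_replicate hc
      · exact hN1 _ (le_max_left _ _)
      · exact hN2 _ (le_max_right _ _)
    · -- both movers: w = rep N a ++ rep M b
      have hsne : s ≠ q := fun hx => hqa (hx ▸ hs)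
      have htne : t ≠ q := fun hx => hqb (hx ▸ ht)
      have hsprem : s = none ∨ s ∉ (Ak k n).step s a := target_moves hk q a s hs hsne
      have htpremb : t = none ∨ t ∉ (Ak k n).step t b := target_moves hk q b t ht htne
      obtain ⟨N1, hN1⟩ := none_in_rep hk s a hsprem
      obtain ⟨M2, hM2⟩ := none_in_rep hk t b htpremb
      by_cases hta : t ∈ (Ak k n).step t a
      · -- t stays put during the a's
        refine ⟨List.replicate N1 a ++ List.replicate M2 b, ?_, none, ?_, ?_⟩
        · intro c hc
          rcases List.mem_append.1 hc with h | h
          · left; exact List.eq_of_mem_replicate h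
          · right; exact List.eq_of_mem_replicate h
        · rw [evalFrom_app]
          exact none_persist (hN1 _ le_rfl) _
        · rw [evalFrom_app, evalFrom_rep_self hk hta]
          exact hM2 _ le_rfl
      · obtain ⟨N2, hN2⟩ := none_in_rep hk t a (Or.inr hta)
        refine ⟨List.replicate (max N1 N2) a ++ List.replicate M2 b, ?_, none, ?_, ?_⟩
        · intro c hc
          rcases List.mem_append.1 hc with h | h
          · left; exact List.eq_of_mem_replicate h
          · right; exact List.eq_of_mem_replicate h
        · rw [evalFrom_app]
          exact none_persist (hN1 _ (le_max_left _ _)) _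
        · rw [evalFrom_app]
          exact none_persist (hN2 _ (le_max_right _ _)) _

end S12

namespace S12

theorem upd_gt {x : ℕ → ℕ} {m r : ℕ} (h : m < r) : upd x m r = x r := by
  unfold upd; rw [if_neg (by omega)]

theorem upd_le {x : ℕ → ℕ} {m r : ℕ} (h1 : 1 ≤ r) (h2 : r ≤ m) : upd x m r = x m - 1 := by
  unfold upd; rw [if_pos ⟨h1, h2⟩]

def Good (k n : ℕ) (x : ℕ → ℕ) : Set (St k n) :=
  {q | ∃ R C, q = mk k n R C ∧ 1 ≤ R ∧ R ≤ n ∧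
    ((C ≤ k ∧ C + x R = k) ∨ (k < C ∧ C ≤ 2*k ∧ R < n ∧ C + x (R+1) ≤ 2*k))}

theorem good_step {k n : ℕ} (hk : 1 ≤ k) {x : ℕ → ℕ} (hInv : Inv k n x) (a : Ltr n)
    (hp : Pre n x a.1) {q q' : St k n} (hq : q ∈ Good k n x)
    (hstep : q' ∈ (Ak k n).step q a) : q' ∈ Good k n (upd x a.1) := by
  obtain ⟨R, C, hqmk, hR1, hR2, hcond⟩ := hq
  obtain ⟨hm1, hm2, hzero, hpos⟩ := hp
  have hC2 : C ≤ 2*k := by rcases hcond with ⟨h, _⟩ | ⟨_, h, _⟩ <;> omega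
  have hxm : x a.1 ≤ k := hInv.1 a.1 hm1 hm2
  rw [hqmk, mk_def hR1 hR2 hC2, step_some] at hstep
  have hstep' : q' ∈ T k n (R-1+1) C a.1 := hstep
  rw [show R-1+1 = R from by omega] at hstep'
  clear hstep
  unfold T at hstep'
  split_ifs at hstep' with h1 h2 h3 h4 h5 h6 h7 h8 h9 h10 h11
  · -- up, m < R : self
    rw [Set.mem_singleton_iff] at hstep'
    refine ⟨R, C, hstep', hR1, hR2, Or.inl ⟨h1, ?_⟩⟩
    rw [upd_gt h2]
    rcases hcond with ⟨_, h⟩ | ⟨h, _⟩ <;> omega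
  · -- spawn
    simp only [Set.mem_setOf_eq] at hstep'
    obtain ⟨l, hl1, hl2, hql⟩ := hstep'
    refine ⟨l, C+1, hql, hl1, by omega, Or.inl ⟨by omega, ?_⟩⟩
    rw [upd_le hl1 (by omega)]
    rcases hcond with ⟨_, h⟩ | ⟨h, _⟩
    · rw [← h3] at h; omega
    · omega
  · -- up, m = R, C = k : impossible on valid step
    exfalso
    rcases hcond with ⟨_, h⟩ | ⟨h, _⟩
    · rw [← h3] at h; omega
    · omega
  · -- up, m > R, C < k : impossible
    exfalso
    rcases hcond with ⟨_, h⟩ | ⟨h, _⟩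
    · have := hzero R hR1 (by omega)
      omega
    · omega
  · -- up C = k, m = R+1 : post entry
    rw [Set.mem_singleton_iff] at hstep'
    refine ⟨R, k+1, hstep', hR1, hR2, Or.inr ⟨by omega, by omega, by omega, ?_⟩⟩
    rw [← h6, upd_le hm1 le_rfl]
    omega
  · -- up C = k, m > R+1 : handoff
    rw [Set.mem_singleton_iff] at hstep'
    refine ⟨a.1-1, k+1, hstep', by omega, by omega, Or.inr ⟨by omega, by omega, by omega, ?_⟩⟩
    rw [show a.1-1+1 = a.1 from by omega, upd_le hm1 le_rfl]
    omega
  · -- post with R = n : impossible (Good posts have R < n)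
    exfalso
    rcases hcond with ⟨h, _⟩ | ⟨_, _, h, _⟩ <;> omega
  · exfalso
    rcases hcond with ⟨h, _⟩ | ⟨_, _, h, _⟩ <;> omega
  · -- post, m ≤ R : self
    rw [Set.mem_singleton_iff] at hstep'
    rcases hcond with ⟨h, _⟩ | ⟨hA, hB, hC', hD⟩
    · omega
    refine ⟨R, C, hstep', hR1, hR2, Or.inr ⟨hA, hB, hC', ?_⟩⟩
    rw [upd_gt (by omega)]
    exact hD
  · -- post chain
    rw [Set.mem_singleton_iff] at hstep'
    rcases hcond with ⟨h, _⟩ | ⟨hA, hB, hC', hD⟩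
    · omega
    refine ⟨R, C+1, hstep', hR1, hR2, Or.inr ⟨by omega, by omega, hC', ?_⟩⟩
    rw [show R+1 = a.1 from by omega, upd_le hm1 le_rfl,
      show a.1 = R+1 from by omega]
    omega
  · -- post, m = R+1, C = 2k : impossible
    exfalso
    rcases hcond with ⟨h, _⟩ | ⟨hA, hB, hC', hD⟩
    · omega
    · rw [← h10] at hD
      omega
  · -- post handoff
    rw [Set.mem_singleton_iff] at hstep'
    rcases hcond with ⟨h, _⟩ | ⟨hA, hB, hC', hD⟩
    · omega
    refine ⟨a.1-1, k+1, hstep', by omega, by omega, Or.inr ⟨by omega, by omega, by omega, ?_⟩⟩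
    rw [show a.1-1+1 = a.1 from by omega, upd_le hm1 le_rfl]
    omega

theorem sound {k n : ℕ} (hk : 1 ≤ k) :
    ∀ (w : List (Ltr n)) (x z : ℕ → ℕ) (S : Set (St k n)),
      MRun n x (w.map Subtype.val) z → Inv k n x → S ⊆ Good k n x →
      (Ak k n).evalFrom S w ⊆ Good k n z := by
  intro w
  induction w with
  | nil =>
    intro x z S hrun hInv hS
    cases hrun
    exact hS
  | cons a w ih =>
    intro x z S hrun hInv hS
    rw [List.map_cons] at hrun
    cases hrun with
    | cons hp hrest =>
      have hstep : (Ak k n).stepSet S a ⊆ Good k n (upd x a.1) := by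
        intro q' hq'
        rw [NFA.mem_stepSet] at hq'
        obtain ⟨p, hpS, hpstep⟩ := hq'
        exact good_step hk hInv a hp (hS hpS) hpstep
      exact ih (upd x a.1) z _ hrest (Inv_upd hInv hp) hstep

end S12

namespace S12

theorem step_mk {k n r c : ℕ} (h1 : 1 ≤ r) (h2 : r ≤ n) (h3 : c ≤ 2*k) (a : Ltr n) :
    (Ak k n).step (mk k n r c) a = T k n r c a.1 := by
  rw [mk_def h1 h2 h3]
  have : (Ak k n).step (some (⟨r-1, by omega⟩, ⟨c, by omega⟩)) a
      = T k n (r-1+1) c a.1 := rfl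
  rw [this, show r-1+1 = r from by omega]


def Covers (k n : ℕ) (S : Set (St k n)) (x : ℕ → ℕ) : Prop :=
  ∀ r, 1 ≤ r → r ≤ n → mk k n r (k - x r) ∈ S

theorem covers_start (k n : ℕ) : Covers k n (Ak k n).start (fun _ => k) := by
  intro r h1 h2
  exact ⟨r, h1, h2, by rw [Nat.sub_self]⟩

theorem covers_step {k n : ℕ} (hk : 1 ≤ k) {x : ℕ → ℕ} {S : Set (St k n)}
    (hInv : Inv k n x) (a : Ltr n) (hp : Pre n x a.1) (hS : Covers k n S x) :
    Covers k n ((Ak k n).stepSet S a) (upd x a.1) := by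
  obtain ⟨hm1, hm2, hzero, hpos⟩ := hp
  intro r h1 h2
  rw [NFA.mem_stepSet]
  rcases lt_or_ge a.1 r with hlt | hle
  · -- r > m : the row-r witness self-loops
    refine ⟨mk k n r (k - x r), hS r h1 h2, ?_⟩
    rw [show upd x a.1 r = x r from upd_gt hlt, step_mk h1 h2 (by omega)]
    unfold T
    rw [if_pos (by omega : k - x r ≤ k), if_pos hlt]
    rfl
  · -- r ≤ m : spawned by the row-m witness
    have hxm : x a.1 ≤ k := hInv.1 a.1 hm1 hm2
    refine ⟨mk k n a.1 (k - x a.1), hS a.1 hm1 hm2, ?_⟩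
    rw [step_mk hm1 hm2 (by omega)]
    unfold T
    rw [if_pos (by omega : k - x a.1 ≤ k), if_neg (by omega : ¬ a.1 < a.1), if_pos rfl,
      if_pos (by omega : k - x a.1 < k)]
    refine ⟨r, h1, hle, ?_⟩
    rw [upd_le h1 hle]
    congr 1
    omega

theorem covers_run {k n : ℕ} (hk : 1 ≤ k) :
    ∀ (w : List (Ltr n)) (x z : ℕ → ℕ) (S : Set (St k n)),
      MRun n x (w.map Subtype.val) z → Inv k n x → Covers k n S x →
      Covers k n ((Ak k n).evalFrom S w) z := by
  intro w
  induction w with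
  | nil =>
    intro x z S hrun hInv hS
    cases hrun
    exact hS
  | cons a w ih =>
    intro x z S hrun hInv hS
    rw [List.map_cons] at hrun
    cases hrun with
    | cons hp hrest =>
      exact ih (upd x a.1) z _ hrest (Inv_upd hInv hp) (covers_step hk hInv a hp hS)

theorem covers_fail {k n : ℕ} (hk : 1 ≤ k) {x : ℕ → ℕ} {S : Set (St k n)}
    (hInv : Inv k n x) (a : Ltr n) (hfail : ¬ Pre n x a.1) (hS : Covers k n S x) :
    (none : St k n) ∈ (Ak k n).stepSet S a := by
  obtain ⟨hm1, hm2⟩ := a.2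
  rw [NFA.mem_stepSet]
  by_cases hx : x a.1 = 0
  · -- excess letter: the row-m witness sits at column k and fires
    refine ⟨mk k n a.1 (k - x a.1), hS a.1 hm1 hm2, ?_⟩
    rw [step_mk hm1 hm2 (by omega)]
    unfold T
    rw [if_pos (by omega : k - x a.1 ≤ k), if_neg (by omega : ¬ a.1 < a.1), if_pos rfl,
      if_neg (by omega : ¬ k - x a.1 < k)]
    rfl
  · -- some smaller counter is nonzero: its witness fires
    have hj : ∃ j, 1 ≤ j ∧ j < a.1 ∧ x j ≠ 0 := by
      by_contra hcon
      push_neg at hcon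
      exact hfail ⟨hm1, hm2, fun j hj1 hj2 => hcon j hj1 hj2, by omega⟩
    obtain ⟨j, hj1, hj2, hjx⟩ := hj
    have hxj : x j ≤ k := hInv.1 j hj1 (by omega)
    refine ⟨mk k n j (k - x j), hS j hj1 (by omega), ?_⟩
    rw [step_mk hj1 (by omega) (by omega)]
    unfold T
    rw [if_pos (by omega : k - x j ≤ k), if_neg (by omega : ¬ a.1 < j),
      if_neg (by omega : ¬ a.1 = j), if_pos (by omega : k - x j < k)]
    rfl

theorem decomp {n : ℕ} : ∀ (w : List (Ltr n)) (x : ℕ → ℕ),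
    (∃ z, MRun n x (w.map Subtype.val) z) ∨
    ∃ (u : List (Ltr n)) (a : Ltr n) (v : List (Ltr n)) (y : ℕ → ℕ),
      w = u ++ a :: v ∧ MRun n x (u.map Subtype.val) y ∧ ¬ Pre n y a.1 := by
  intro w
  induction w with
  | nil => intro x; exact Or.inl ⟨x, .nil x⟩
  | cons a w ih =>
    intro x
    by_cases hp : Pre n x a.1
    · rcases ih (upd x a.1) with ⟨z, hz⟩ | ⟨u, b, v, y, heq, hu, hfail⟩
      · exact Or.inl ⟨z, .cons hp hz⟩
      · exact Or.inr ⟨a :: u, b, v, y, by rw [heq]; rfl, .cons hp hu, hfail⟩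
    · exact Or.inr ⟨[], a, w, x, rfl, .nil x, hp⟩

end S12

namespace S12

theorem lenW : ∀ j i, (W j i).length = (j + i).choose i - 1 := by
  intro j
  induction j with
  | zero =>
    intro i
    rw [W_zero]
    simp [Nat.choose_self]
  | succ j ihj =>
    intro i
    induction i with
    | zero =>
      rw [W_szero]
      simp
    | succ i ihi =>
      rw [W_succ]
      rw [List.length_append, List.length_cons]
      rw [ihi, ihj (i+1)]
      have hp : (j + 1 + i + 1).choose (i + 1) = (j+1+i).choose i + (j+1+i).choose (i+1) :=
        Nat.choose_succ_succ (j+1+i) i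
      have e1 : j + (i+1) = j + 1 + i := by omega
      have e2 : j + 1 + (i+1) = j + 1 + i + 1 := by omega
      rw [e1, e2, hp]
      have pos1 : 0 < (j+1+i).choose i := Nat.choose_pos (by omega)
      have pos2 : 0 < (j+1+i).choose (i+1) := Nat.choose_pos (by omega)
      omega

theorem accepts_iff {k n : ℕ} (M : NFA (Ltr n) (St k n)) (w : List (Ltr n)) :
    w ∈ M.accepts ↔ ∃ q ∈ M.accept, q ∈ M.evalFrom M.start w := Iff.rfl

theorem lang (k n : ℕ) (hk : 1 ≤ k) (hn : 1 ≤ n) (w : List (Ltr n)) :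
    w ∈ (Ak k n).accepts ↔ w.map Subtype.val ≠ W k n := by
  constructor
  · -- accepted → not W
    intro hacc heq
    obtain ⟨q, hqacc, hqeval⟩ := hacc
    have hrun : MRun n (fun _ => k) (w.map Subtype.val) (zer n (fun _ => k)) := by
      rw [heq]
      exact runW n k n _ le_rfl (fun _ _ _ => rfl)
    have hstart : (Ak k n).start ⊆ Good k n (fun _ => k) := by
      rintro q0 ⟨i, hi1, hi2, hq0⟩
      exact ⟨i, 0, hq0, hi1, hi2, Or.inl ⟨by omega, by show (0:ℕ) + k = k; omega⟩⟩
    have hgood := sound hk w _ _ _ hrun (Inv_const k n) hstart hqeval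
    obtain ⟨R, C, hqmk, hR1, hR2, hcond⟩ := hgood
    have hzer : zer n (fun _ => k) R = 0 := by
      unfold zer; rw [if_pos ⟨hR1, hR2⟩]
    have hCk : k ≤ C := by
      rcases hcond with ⟨h1, h2⟩ | ⟨h1, _⟩
      · omega
      · omega
    -- q is accepting: q = none or col < k; both contradict
    rcases hqacc with hq | ⟨i, j, hqs, hjk⟩
    · rw [hq] at hqmk
      have hC2 : C ≤ 2*k := by
        rcases hcond with ⟨h1, _⟩ | ⟨_, h1, _⟩ <;> omega
      exact mk_ne_none hR1 hR2 hC2 hqmk.symm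
    · have hC2 : C ≤ 2*k := by
        rcases hcond with ⟨h1, _⟩ | ⟨_, h1, _⟩ <;> omega
      rw [hqs] at hqmk
      rw [mk_def hR1 hR2 hC2] at hqmk
      simp only [Option.some.injEq, Prod.mk.injEq, Fin.mk.injEq] at hqmk
      have hjC : j.1 = C := by rw [hqmk.2]
      omega
  · -- not W → accepted
    intro hne
    rcases decomp w (fun _ => k) with ⟨z, hz⟩ | ⟨u, a, v, y, heq, hu, hfail⟩
    · have hInvz : Inv k n z := Inv_run hz (Inv_const k n)
      have hcov := covers_run hk w _ _ _ hz (Inv_const k n) (covers_start k n)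
      have hnz : ¬ Zn n z := by
        intro hzn
        exact hne (MAcc_unique ⟨z, hz, hzn⟩)
      have hl : ∃ l, 1 ≤ l ∧ l ≤ n ∧ z l ≠ 0 := by
        by_contra hcon
        push_neg at hcon
        exact hnz (fun l h1 h2 => hcon l h1 h2)
      obtain ⟨l, hl1, hl2, hlz⟩ := hl
      have hzn1 : 1 ≤ z n := by
        have := hInvz.2 l n hl1 hl2 le_rfl
        omega
      have hznk : z n ≤ k := hInvz.1 n hn le_rfl
      have hmem := hcov n hn le_rfl
      refine ⟨mk k n n (k - z n), ?_, hmem⟩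
      rw [mk_def hn le_rfl (by omega)]
      exact Or.inr ⟨_, _, rfl, by show k - z n < k; omega⟩
    · have hInvy : Inv k n y := Inv_run hu (Inv_const k n)
      have hcov := covers_run hk u _ _ _ hu (Inv_const k n) (covers_start k n)
      have hnone := covers_fail hk hInvy a hfail hcov
      refine ⟨none, Or.inl rfl, ?_⟩
      rw [heq, show u ++ a :: v = (u ++ [a]) ++ v from by simp]
      show (none : St k n) ∈ (Ak k n).evalFrom (Ak k n).start (u ++ [a] ++ v)
      rw [evalFrom_app]
      refine none_persist ?_ v
      rw [evalFrom_app, NFA.evalFrom_singleton]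
      exact hnone

end S12


/-- For all `k, n ≥ 1` there is a ptNFA (complete, partially ordered, self-loop
deterministic and confluent, with the UMS property) over the `n`-letter alphabet
`{a_1,...,a_n}` with exactly `n(2k+1)+1` states accepting every word except the
single word `W_{k,n}`, which has length `binom(k+n,n) - 1`. -/
theorem stmt_12 (k n : ℕ) (hk : 1 ≤ k) (hn : 1 ≤ n) :
    ∃ (σ : Type) (_ : Fintype σ) (M : NFA {a : ℕ // 1 ≤ a ∧ a ≤ n} σ),
      Fintype.card σ = n * (2 * k + 1) + 1 ∧
      PartiallyOrderedNFA M ∧ CompleteNFA M ∧ SelfLoopDet M ∧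
      ConfluentNFA M ∧ UMS M ∧
      (∀ w, w ∈ M.accepts ↔ w.map Subtype.val ≠ W k n) ∧
      (W k n).length = (k + n).choose n - 1 := by
  refine ⟨S12.St k n, inferInstance, S12.Ak k n, ?_, S12.po k n hk, S12.complete k n hk,
    S12.sld k n hk, S12.confluent k n hk, S12.ums k n hk, S12.lang k n hk hn, S12.lenW k n⟩
  rw [S12.card_St]
end

section
/- For every n ≥ 1 and m ≥ 1, there exists an NFA with O(m·n) states over an n-letter alphabet whose complement language is a single word of length binomial(m+n,n) - 1; in particular, taking m = n, there is an NFA with O(n^2) states whose shortest (and only) non-accepted word has length at least 2^n - 1. -/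
namespace NfaSingle

/-! ### Digit semantics -/

def dstep (f : ℕ → ℕ) (j : ℕ) : ℕ → ℕ := fun i =>
  if i = j then f i + 1 else if i < j then 0 else f i

def DD (f : ℕ → ℕ) (u : List ℕ) : ℕ → ℕ := u.foldl dstep f

@[simp] lemma DD_nil (f : ℕ → ℕ) : DD f [] = f := rfl

@[simp] lemma DD_cons (f : ℕ → ℕ) (x : ℕ) (u : List ℕ) :
    DD f (x :: u) = DD (dstep f x) u := rfl

lemma DD_append (f : ℕ → ℕ) (u v : List ℕ) :
    DD f (u ++ v) = DD (DD f u) v := by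
  simp [DD, List.foldl_append]

lemma dstep_self (f : ℕ → ℕ) (j : ℕ) : dstep f j j = f j + 1 := by simp [dstep]

lemma dstep_lt (f : ℕ → ℕ) {i j : ℕ} (h : i < j) : dstep f j i = 0 := by
  simp [dstep, h, Nat.ne_of_lt h]

lemma dstep_gt (f : ℕ → ℕ) {i j : ℕ} (h : j < i) : dstep f j i = f i := by
  have h1 : i ≠ j := by omega
  have h2 : ¬ i < j := by omega
  simp [dstep, h1, h2]

/-- `DD f u i` only depends on `f i`. -/
lemma DD_pt {f g : ℕ → ℕ} (u : List ℕ) (i : ℕ) (h : f i = g i) :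
    DD f u i = DD g u i := by
  induction u generalizing f g with
  | nil => exact h
  | cons x u ih =>
    refine ih ?_
    rcases lt_trichotomy i x with hc | hc | hc
    · rw [dstep_lt _ hc, dstep_lt _ hc]
    · subst hc; rw [dstep_self, dstep_self, h]
    · rw [dstep_gt _ hc, dstep_gt _ hc, h]

lemma DD_keep {f : ℕ → ℕ} {u : List ℕ} {l : ℕ} (h : ∀ x ∈ u, x < l) :
    DD f u l = f l := by
  induction u generalizing f with
  | nil => rfl
  | cons x u ih =>
    have hx : x < l := h x (by simp)
    rw [DD_cons, ih (fun y hy => h y (by simp [hy])), dstep_gt _ hx]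

lemma DD_count {f : ℕ → ℕ} {u : List ℕ} {l : ℕ} (h : ∀ x ∈ u, x ≤ l) :
    DD f u l = f l + u.count l := by
  induction u generalizing f with
  | nil => simp
  | cons x u ih =>
    have hx : x ≤ l := h x (by simp)
    rw [DD_cons, ih (fun y hy => h y (by simp [hy]))]
    rcases eq_or_lt_of_le hx with hc | hc
    · subst hc; rw [dstep_self, List.count_cons_self]; omega
    · rw [dstep_gt _ hc]
      have hne : l ≠ x := by omega
      rw [List.count_cons_of_ne hne.symm]

lemma DD_reset {f : ℕ → ℕ} (u : List ℕ) {c : ℕ} (p : List ℕ) {i : ℕ} (h : i < c) :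
    DD f (u ++ c :: p) i = DD (fun _ => 0) p i := by
  rw [DD_append, DD_cons]
  exact DD_pt p i (by rw [dstep_lt _ h])

/-- counting inside `takeWhile` ignores everything from a blocking letter on -/
lemma count_takeWhile_append {i : ℕ} {c : ℕ} (hc : ¬ c ≤ i + 1) (s B : List ℕ) :
    ((s ++ c :: B).takeWhile (· ≤ i + 1)).count (i+1)
      = (s.takeWhile (· ≤ i + 1)).count (i+1) := by
  induction s with
  | nil => simp [List.takeWhile_cons, hc]
  | cons x s ih =>
    by_cases hx : x ≤ i + 1 <;> simp [List.takeWhile_cons, hx, List.count_cons, ih]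

/-! ### The word -/

def Wd : ℕ → ℕ → List ℕ
  | _, 0 => []
  | 0, _+1 => []
  | k+1, j+1 => Wd (k+1) j ++ j :: Wd k (j+1)
termination_by k j => (k, j)
decreasing_by
  · exact Prod.Lex.right _ (by omega)
  · exact Prod.Lex.left _ _ (by omega)

@[simp] lemma Wd_zero_right (k : ℕ) : Wd k 0 = [] := by cases k <;> simp [Wd]
@[simp] lemma Wd_zero_left (j : ℕ) : Wd 0 j = [] := by cases j <;> simp [Wd]
lemma Wd_succ (k j : ℕ) : Wd (k+1) (j+1) = Wd (k+1) j ++ j :: Wd k (j+1) := by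
  rw [Wd]

lemma Wd_letters : ∀ k j, ∀ x ∈ Wd k j, x < j := by
  intro k j
  induction k, j using Wd.induct with
  | case1 k => simp
  | case2 j => simp
  | case3 k j ih1 ih2 =>
    intro x hx
    rw [Wd_succ] at hx
    rcases List.mem_append.mp hx with h | h
    · exact lt_trans (ih1 x h) (by omega)
    · rcases List.mem_cons.mp h with h | h
      · omega
      · exact ih2 x h

lemma Wd_len : ∀ k j, (Wd k j).length + 1 = (k + j).choose j := by
  intro k j
  induction k, j using Wd.induct with
  | case1 k => simp
  | case2 j => simp
  | case3 k j ih1 ih2 =>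
    rw [Wd_succ]
    have pascal : (k + 1 + (j + 1)).choose (j+1)
        = (k + 1 + j).choose j + (k + (j+1)).choose (j+1) := by
      have h : k + 1 + (j + 1) = (k + 1 + j) + 1 := by omega
      rw [h, Nat.choose_succ_succ']
      congr 2
      omega
    simp only [List.length_append, List.length_cons, Nat.succ_eq_add_one] at *
    omega

lemma Wd_count_top : ∀ k j, 1 ≤ j → (Wd k j).count (j-1) = k := by
  intro k j
  induction k, j using Wd.induct with
  | case1 k => omega
  | case2 j => intro _; simp
  | case3 k j ih1 ih2 =>
    intro _
    rw [Wd_succ, List.count_append]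
    have h0 : (Wd (k+1) j).count ((j+1)-1) = 0 := by
      rw [List.count_eq_zero]
      intro h
      exact absurd (Wd_letters _ _ _ h) (by omega)
    have h2 := ih2 (by omega)
    simp only [Nat.succ_eq_add_one, Nat.add_sub_cancel] at *
    rw [h0, List.count_cons_self, h2]
    omega


lemma split_middle {A B u s : List ℕ} {c : ℕ} (h : A ++ c :: B = u ++ s) :
    (∃ s₀, A = u ++ s₀ ∧ s = s₀ ++ c :: B) ∨ (∃ u₁, u = A ++ c :: u₁ ∧ B = u₁ ++ s) := by
  rcases List.append_eq_append_iff.mp h.symm with ⟨l, hl1, hl2⟩ | ⟨l, hl1, hl2⟩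
  · exact Or.inl ⟨l, hl1, hl2⟩
  · cases l with
    | nil => exact Or.inl ⟨[], by simpa using hl1.symm, by simpa using hl2.symm⟩
    | cons y l =>
      obtain ⟨rfl, hB⟩ : y = c ∧ l ++ s = B := by
        constructor
        · exact (List.cons.injEq _ _ _ _ ▸ hl2).1.symm
        · exact ((List.cons.injEq _ _ _ _ ▸ hl2).2).symm
      exact Or.inr ⟨l, hl1, hB.symm⟩

lemma Wd_D_high (k j : ℕ) (f : ℕ → ℕ) {l : ℕ} (h : j ≤ l) : DD f (Wd k j) l = f l :=
  DD_keep (fun x hx => lt_of_lt_of_le (Wd_letters _ _ _ hx) h)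

lemma Wd_D_top : ∀ k j, 1 ≤ j → ∀ f, DD f (Wd k j) (j-1) = f (j-1) + k := by
  intro k j
  induction k, j using Wd.induct with
  | case1 k => omega
  | case2 j => intro _ f; simp
  | case3 k j ih1 ih2 =>
    intro _ f
    rw [Wd_succ, DD_append, DD_cons]
    have h2 := ih2 (by omega)
    simp only [Nat.succ_eq_add_one, Nat.add_sub_cancel] at *
    rw [h2, dstep_self, Wd_D_high _ _ _ (le_refl j)]
    omega

lemma Wd_D_low : ∀ k j, ∀ f l, 1 ≤ k → l + 1 < j → DD f (Wd k j) l = 0 := by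
  intro k j
  induction k, j using Wd.induct with
  | case1 k => omega
  | case2 j => omega
  | case3 k j ih1 ih2 =>
    intro f l _ hl
    rw [Wd_succ, DD_append, DD_cons]
    have hlj : l < j := by omega
    rcases Nat.eq_zero_or_pos k with hk | hk
    · subst hk
      simp only [Wd_zero_left, DD_nil]
      rw [dstep_lt _ hlj]
    · exact ih2 _ _ hk (by omega)

lemma Wd_prefix_bound : ∀ k j, ∀ f u s i, Wd k j = u ++ s → DD f u i ≤ f i + k := by
  intro k j
  induction k, j using Wd.induct with
  | case1 k =>
    intro f u s i h
    rw [Wd_zero_right] at h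
    obtain ⟨rfl, rfl⟩ := List.append_eq_nil_iff.mp h.symm
    simp
  | case2 j =>
    intro f u s i h
    rw [Wd_zero_left] at h
    obtain ⟨rfl, rfl⟩ := List.append_eq_nil_iff.mp h.symm
    simp
  | case3 k j ih1 ih2 =>
    intro f u s i h
    rw [Wd_succ] at h
    rcases split_middle h with ⟨s₀, hA, _⟩ | ⟨u₁, rfl, hB⟩
    · have := ih1 f u s₀ i hA
      omega
    · rw [DD_append, DD_cons]
      set g := dstep (DD f (Wd (k+1) j)) j with hg
      have hgb : g i ≤ f i + 1 := by
        rcases lt_trichotomy i j with hc | hc | hc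
        · rw [hg, dstep_lt _ hc]; omega
        · subst hc
          rw [hg, dstep_self, Wd_D_high _ _ _ (le_refl i)]
        · rw [hg, dstep_gt _ hc, Wd_D_high _ _ _ (le_of_lt hc)]
          omega
      have := ih2 g u₁ s i hB
      omega

lemma Wd_prefix_lt : ∀ k j, ∀ f u x s, Wd k j = u ++ x :: s → DD f u x < f x + k := by
  intro k j
  induction k, j using Wd.induct with
  | case1 k =>
    intro f u x s h
    rw [Wd_zero_right] at h
    exact absurd (congrArg List.length h) (by simp)
  | case2 j =>
    intro f u x s h
    rw [Wd_zero_left] at h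
    exact absurd (congrArg List.length h) (by simp)
  | case3 k j ih1 ih2 =>
    intro f u x s h
    rw [Wd_succ] at h
    rcases split_middle h with ⟨s₀, hA, hs⟩ | ⟨u₁, rfl, hB⟩
    · cases s₀ with
      | nil =>
        simp only [List.append_nil] at hA
        obtain ⟨rfl, _⟩ : x = j ∧ s = Wd k (j+1) := by
          simpa using hs
        subst hA
        rw [Wd_D_high _ _ _ (le_refl x)]
        omega
      | cons y s₀ =>
        obtain ⟨rfl, hA2⟩ : x = y ∧ s = s₀ ++ j :: Wd k (j+1) := by simpa using hs
        have := ih1 f u x s₀ hA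
        omega
    · rw [DD_append, DD_cons]
      set g := dstep (DD f (Wd (k+1) j)) j with hg
      have hgb : g x ≤ f x + 1 := by
        rcases lt_trichotomy x j with hc | hc | hc
        · rw [hg, dstep_lt _ hc]; omega
        · subst hc
          rw [hg, dstep_self, Wd_D_high _ _ _ (le_refl x)]
        · rw [hg, dstep_gt _ hc, Wd_D_high _ _ _ (le_of_lt hc)]
          omega
      have := ih2 g u₁ x s hB
      omega


/-! ### Conditions characterizing the word -/

def Z : ℕ → ℕ := fun _ => 0

def PER (i : ℕ) (v : List ℕ) : Prop :=
  (∀ u s, v = u ++ s → (s = [] ∨ ∃ x s', s = x :: s' ∧ i + 2 ≤ x) → DD Z u i = 0) ∧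
  (∀ u s, v = u ++ (i+1) :: s →
    ((s.takeWhile (· ≤ i + 1)).count (i+1)) + 1 = DD Z u i)

def COND (κ j : ℕ) (v : List ℕ) : Prop :=
  (∀ x ∈ v, x < j) ∧ v.count (j-1) = κ ∧ ∀ i, i + 2 ≤ j → PER i v

lemma takeWhile_all {p : ℕ → Bool} : ∀ {l : List ℕ}, (∀ x ∈ l, p x) → l.takeWhile p = l := by
  intro l
  induction l with
  | nil => intro _; rfl
  | cons x l ih =>
    intro h
    rw [List.takeWhile_cons, if_pos (h x (by simp))]
    rw [ih (fun y hy => h y (by simp [hy]))]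

lemma first_split {v : List ℕ} {c : ℕ} (h : c ∈ v) :
    ∃ u s, v = u ++ c :: s ∧ c ∉ u := by
  induction v with
  | nil => simp at h
  | cons x v ih =>
    by_cases hx : x = c
    · exact ⟨[], v, by simp [hx], by simp⟩
    · have h' : c ∈ v := by
        rcases List.mem_cons.mp h with h' | h'
        · exact absurd h'.symm hx
        · exact h'
      rcases ih h' with ⟨u, s, rfl, hnot⟩
      refine ⟨x :: u, s, rfl, ?_⟩
      simp only [List.mem_cons]
      push_neg
      exact ⟨fun hc => hx hc.symm, hnot⟩

lemma Wd_one : ∀ k, Wd k 1 = List.replicate k 0 := by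
  intro k
  induction k with
  | zero => simp
  | succ k ih => rw [Wd_succ, ih]; simp [List.replicate_succ]

theorem COND_unique (κ : ℕ) : ∀ j v, 1 ≤ j → COND κ j v → v = Wd κ j := by
  induction κ using Nat.strong_induction_on with
  | _ κ ihκ =>
  intro j
  induction j using Nat.strong_induction_on with
  | _ j ihj =>
  intro v hj hC
  obtain ⟨hC1, hC2, hC3⟩ := hC
  rcases Nat.lt_or_ge j 2 with hj2 | hj2
  · -- j = 1
    obtain rfl : j = 1 := by omega
    rw [Wd_one]
    have hall : ∀ x ∈ v, x = 0 := fun x hx => by have := hC1 x hx; omega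
    have hlen : v.length = κ := by
      rw [← hC2]
      simp only [Nat.sub_self]
      exact (List.count_eq_length.mpr (fun x hx => (hall x hx).symm)).symm
    exact List.eq_replicate_iff.mpr ⟨hlen, hall⟩
  · obtain ⟨i2, rfl⟩ : ∃ t, j = t + 2 := ⟨j - 2, by omega⟩
    rw [show i2 + 2 - 1 = i2 + 1 by omega] at hC2
    rcases Nat.eq_zero_or_pos κ with hκ0 | hκpos
    · -- empty case
      subst hκ0
      rw [Wd_zero_left]
      rcases List.eq_nil_or_concat v with rfl | ⟨u, x, rfl⟩
      · rfl
      exfalso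
      rw [List.concat_eq_append] at *
      have hxv : x ∈ u ++ [x] := by simp
      have hxlt : x < i2 + 2 := hC1 x hxv
      by_cases hx : x = i2 + 1
      · have : 0 < (u ++ [x]).count (i2 + 1) := by
          rw [List.count_pos_iff]
          simpa [hx] using hxv
        omega
      · have hper := (hC3 x (by omega)).1 (u ++ [x]) [] (by simp) (Or.inl rfl)
        rw [DD_append] at hper
        simp only [DD_cons, DD_nil] at hper
        rw [dstep_self] at hper
        omega
    · -- main case
      obtain ⟨κ', rfl⟩ : ∃ t, κ = t + 1 := ⟨κ - 1, by omega⟩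
      have hmem : i2 + 1 ∈ v := by
        rw [← List.count_pos_iff]
        omega
      obtain ⟨u₀, v', rfl, hnot⟩ := first_split hmem
      have hu₀lt : ∀ x ∈ u₀, x < i2 + 1 := by
        intro x hx
        have h1 : x < i2 + 2 := hC1 x (by simp [hx])
        have h2 : x ≠ i2 + 1 := fun h => hnot (h ▸ hx)
        omega
      have hv'lt : ∀ x ∈ v', x < i2 + 2 := fun x hx => hC1 x (by simp [hx])
      have hcv' : v'.count (i2+1) = κ' := by
        rw [List.count_append, List.count_cons_self] at hC2
        have h0 : u₀.count (i2+1) = 0 := List.count_eq_zero.mpr hnot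
        omega
      have hD : DD Z u₀ i2 = κ' + 1 := by
        have hper := (hC3 i2 (by omega)).2 u₀ v' rfl
        rw [takeWhile_all (fun x hx => by
          simpa using Nat.lt_succ_iff.mp (hv'lt x hx))] at hper
        omega
      have hcount0 : u₀.count i2 = κ' + 1 := by
        have := DD_count (f := Z) (u := u₀) (l := i2)
          (fun x hx => by have := hu₀lt x hx; omega)
        rw [hD] at this
        simpa [Z] using this.symm
      have hCu : COND (κ'+1) (i2+1) u₀ := by
        refine ⟨fun x hx => hu₀lt x hx, by simpa using hcount0, ?_⟩
        intro i hi
        constructor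
        · intro u s hsplit hbd
          refine (hC3 i (by omega)).1 u (s ++ (i2+1) :: v') (by rw [hsplit]; simp) ?_
          rcases hbd with rfl | ⟨x, s', rfl, hx⟩
          · exact Or.inr ⟨i2+1, v', by simp, by omega⟩
          · exact Or.inr ⟨x, s' ++ (i2+1) :: v', by simp, hx⟩
        · intro u s hsplit
          have := (hC3 i (by omega)).2 u (s ++ (i2+1) :: v') (by rw [hsplit]; simp)
          rwa [count_takeWhile_append (by omega)] at this
      have hCv : COND κ' (i2+2) v' := by
        refine ⟨hv'lt, by simpa using hcv', ?_⟩
        intro i hi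
        have hilt : i < i2 + 1 := by omega
        constructor
        · intro u s hsplit hbd
          have := (hC3 i (by omega)).1 (u₀ ++ (i2+1) :: u) s (by rw [hsplit]; simp) hbd
          rwa [DD_reset _ _ hilt] at this
        · intro u s hsplit
          have := (hC3 i (by omega)).2 (u₀ ++ (i2+1) :: u) s (by rw [hsplit]; simp)
          rwa [DD_reset _ _ hilt] at this
      have h1 : u₀ = Wd (κ'+1) (i2+1) := ihj (i2+1) (by omega) u₀ (by omega) hCu
      have h2 : v' = Wd κ' (i2+2) := ihκ κ' (by omega) (i2+2) v' (by omega) hCv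
      rw [h1, h2]
      exact (Wd_succ κ' (i2+1)).symm

/-- The word `Wd` satisfies all the `PER` conditions. -/
theorem PER_W : ∀ k j, ∀ i, i + 2 ≤ j → PER i (Wd k j) := by
  intro k j
  induction k, j using Wd.induct with
  | case1 k => omega
  | case2 j =>
    intro i hi
    constructor
    · intro u s hsplit _
      rw [Wd_zero_left] at hsplit
      obtain ⟨rfl, rfl⟩ := List.append_eq_nil_iff.mp hsplit.symm
      rfl
    · intro u s hsplit
      rw [Wd_zero_left] at hsplit
      exact absurd (congrArg List.length hsplit) (by simp)
  | case3 k j ih1 ih2 =>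
    intro i hi
    constructor
    · intro u s hsplit hbd
      rw [Wd_succ] at hsplit
      rcases split_middle hsplit with ⟨s₀, hA, hs⟩ | ⟨u₁, rfl, hB⟩
      · cases s₀ with
        | nil =>
          simp only [List.append_nil] at hA
          subst hA
          rcases hbd with rfl | ⟨x, s', hx, hix⟩
          · exact absurd hs (by simp)
          · rw [hs] at hx
            obtain ⟨h1, -⟩ := List.cons_eq_cons.mp hx.symm
            exact Wd_D_low (k+1) j Z i (by omega) (by omega)
        | cons y s₀' =>
          rcases hbd with rfl | ⟨x, s', hx, hix⟩
          · exact absurd hs (by simp)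
          · rw [hs, List.cons_append] at hx
            obtain ⟨h1, -⟩ := List.cons_eq_cons.mp hx
            subst h1
            have hymem : y ∈ Wd (k+1) j := by rw [hA]; simp
            have hylt : y < j := Wd_letters _ _ _ hymem
            exact (ih1 i (by omega)).1 u (y :: s₀') hA (Or.inr ⟨y, s₀', rfl, hix⟩)
      · have hij : i < j := by omega
        rw [DD_reset _ _ hij]
        exact (ih2 i (by omega)).1 u₁ s hB hbd
    · intro u s hsplit
      rw [Wd_succ] at hsplit
      rcases split_middle hsplit with ⟨s₀, hA, hs⟩ | ⟨u₁, rfl, hB⟩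
      · cases s₀ with
        | nil =>
          simp only [List.append_nil] at hA
          subst hA
          simp only [List.nil_append] at hs
          obtain ⟨hji, rfl⟩ := List.cons_eq_cons.mp hs
          have htw : (Wd k (j+1)).takeWhile (· ≤ i + 1) = Wd k (j+1) :=
            takeWhile_all (fun x hx => by
              have := Wd_letters _ _ _ hx
              simp only [decide_eq_true_eq]
              omega)
          rw [htw]
          have hcnt : (Wd k (j+1)).count (i+1) = k := by
            have := Wd_count_top k (j+1) (by omega)
            simpa [hji] using this
          rw [hcnt]
          have hDt : DD Z (Wd (k+1) (i+1)) (i+1-1) = Z (i+1-1) + (k+1) :=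
            Wd_D_top (k+1) (i+1) (by omega) Z
          simp only [Nat.add_sub_cancel] at hDt
          rw [hji] at hDt
          rw [hDt]
          simp [Z]
        | cons y s₀' =>
          rw [List.cons_append] at hs
          obtain ⟨h1, h2⟩ := List.cons_eq_cons.mp hs
          rw [← h1] at hA
          have hymem : (i+1) ∈ Wd (k+1) j := by rw [hA]; simp
          have hylt : i + 1 < j := Wd_letters _ _ _ hymem
          have hres := (ih1 i (by omega)).2 u s₀' hA
          rw [h2, count_takeWhile_append (by omega)]
          exact hres
      · have hij : i < j := by omega
        rw [DD_reset _ _ hij]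
        exact (ih2 i (by omega)).2 u₁ s hB


/-! ### The NFA -/

abbrev St (n K : ℕ) := (Fin n × Fin (2*K+1)) ⊕ Unit

def nstep (n K : ℕ) : St n K → Fin n → Set (St n K) := fun s a =>
  match s with
  | Sum.inr _ => {Sum.inr ()}
  | Sum.inl (i, t) =>
    if i.val = n - 1 then
      if t.val ≤ K then
        if a.val = i.val then
          if h : t.val < K then {Sum.inl (i, ⟨t.val + 1, by omega⟩)} else {Sum.inr ()}
        else {Sum.inl (i, t)}
      else ∅
    else
      if ht : t.val ≤ K then
        if a.val < i.val then {Sum.inl (i, t)}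
        else if a.val = i.val then
          (if h : t.val < K then {Sum.inl (i, ⟨t.val + 1, by omega⟩)} else {Sum.inr ()})
        else if a.val = i.val + 1 then
          (if t.val = 0 then {Sum.inl (i, ⟨0, by omega⟩), Sum.inr ()}
           else {Sum.inl (i, ⟨0, by omega⟩), Sum.inl (i, ⟨K + t.val, by omega⟩)})
        else
          (if t.val = 0 then {Sum.inl (i, ⟨0, by omega⟩)} else {Sum.inr ()})
      else
        if a.val ≤ i.val then {Sum.inl (i, t)}
        else if a.val = i.val + 1 then
          (if t.val = K + 1 then {Sum.inr ()}
           else {Sum.inl (i, ⟨t.val - 1, by have := t.isLt; omega⟩)})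
        else
          (if t.val = K + 1 then (∅ : Set (St n K)) else {Sum.inr ()})

def nfa (n K : ℕ) : NFA (Fin n) (St n K) where
  step := nstep n K
  start := {s | ∃ i : Fin n, s = Sum.inl (i, ⟨0, by omega⟩)}
  accept := {s | match s with
    | Sum.inr _ => True
    | Sum.inl (i, t) =>
        if i.val = n - 1 then t.val < K else ((1 ≤ t.val ∧ t.val ≤ K) ∨ K + 2 ≤ t.val)}

lemma sink_accept (n K : ℕ) : (Sum.inr () : St n K) ∈ (nfa n K).accept := by
  simp [nfa]

lemma sink_run (n K : ℕ) : ∀ (v u : List (Fin n)),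
    (Sum.inr () : St n K) ∈ (nfa n K).eval u → (u ++ v) ∈ (nfa n K).accepts := by
  intro v
  induction v with
  | nil =>
    intro u h
    exact ⟨Sum.inr (), sink_accept n K, by simpa using h⟩
  | cons a v ih =>
    intro u h
    rw [show u ++ a :: v = (u ++ [a]) ++ v by simp]
    refine ih (u ++ [a]) ?_
    rw [NFA.eval_append_singleton]
    rw [NFA.mem_stepSet]
    exact ⟨_, h, by simp [nfa, nstep]⟩

/-- value of the digit function along a `Fin`-word -/
def DV (u : List (Fin n)) (i : ℕ) : ℕ := DD Z (u.map Fin.val) i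

lemma DV_append_singleton (u : List (Fin n)) (a : Fin n) (i : ℕ) :
    DV (u ++ [a]) i = dstep (DV u) a.val i := by
  unfold DV
  rw [List.map_append, DD_append]
  simp only [List.map_cons, List.map_nil, DD_cons, DD_nil]

section StepLemmas

variable {n K : ℕ} {i : Fin n} {t : Fin (2*K+1)} {a : Fin n}

lemma step_c_stay (ht : t.val ≤ K) (ha : a.val < i.val) :
    Sum.inl (i,t) ∈ nstep n K (Sum.inl (i,t)) a := by
  simp only [nstep]
  split_ifs <;> first | (exfalso; omega) | simp | (simp; omega)

lemma step_c_inc (ht : t.val < K) (ha : a.val = i.val) :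
    (Sum.inl (i, ⟨t.val+1, by omega⟩) : St n K) ∈ nstep n K (Sum.inl (i,t)) a := by
  simp only [nstep]
  split_ifs <;> first | (exfalso; omega) | simp | (simp; omega)

lemma step_c_sink_inc (ht : t.val = K) (ha : a.val = i.val) :
    (Sum.inr () : St n K) ∈ nstep n K (Sum.inl (i,t)) a := by
  simp only [nstep]
  split_ifs <;> first | (exfalso; omega) | simp | (simp; omega)

lemma step_c_zero (ht : t.val ≤ K) (ha : a.val = i.val + 1) :
    (Sum.inl (i, ⟨0, by omega⟩) : St n K) ∈ nstep n K (Sum.inl (i,t)) a := by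
  have htop : ¬ i.val = n - 1 := by have := a.isLt; omega
  simp only [nstep]
  split_ifs <;> first | (exfalso; omega) | simp | (simp; omega)

lemma step_c_zero' (ht : t.val ≤ K) (h0 : t.val = 0) (ha : i.val + 1 < a.val) :
    (Sum.inl (i, ⟨0, by omega⟩) : St n K) ∈ nstep n K (Sum.inl (i,t)) a := by
  have htop : ¬ i.val = n - 1 := by have := a.isLt; omega
  simp only [nstep]
  split_ifs <;> first | (exfalso; omega) | simp | (simp; omega)

lemma step_c_e (ht : t.val ≤ K) (h1 : 1 ≤ t.val) (ha : a.val = i.val + 1) :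
    (Sum.inl (i, ⟨K + t.val, by omega⟩) : St n K) ∈ nstep n K (Sum.inl (i,t)) a := by
  have htop : ¬ i.val = n - 1 := by have := a.isLt; omega
  simp only [nstep]
  split_ifs <;> first | (exfalso; omega) | simp | (simp; omega)

lemma step_c_sink0 (ht : t.val ≤ K) (h0 : t.val = 0) (ha : a.val = i.val + 1) :
    (Sum.inr () : St n K) ∈ nstep n K (Sum.inl (i,t)) a := by
  have htop : ¬ i.val = n - 1 := by have := a.isLt; omega
  simp only [nstep]
  split_ifs <;> first | (exfalso; omega) | simp | (simp; omega)

lemma step_c_sinkclose (ht : t.val ≤ K) (h1 : 1 ≤ t.val) (ha : i.val + 1 < a.val) :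
    (Sum.inr () : St n K) ∈ nstep n K (Sum.inl (i,t)) a := by
  have htop : ¬ i.val = n - 1 := by have := a.isLt; omega
  simp only [nstep]
  split_ifs <;> first | (exfalso; omega) | simp | (simp; omega)

lemma step_e_stay (ht : K < t.val) (htop : ¬ i.val = n - 1) (ha : a.val ≤ i.val) :
    Sum.inl (i,t) ∈ nstep n K (Sum.inl (i,t)) a := by
  simp only [nstep]
  split_ifs <;> first | (exfalso; omega) | simp | (simp; omega)

lemma step_e_dec (ht : K + 1 < t.val) (htop : ¬ i.val = n - 1) (ha : a.val = i.val + 1) :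
    (Sum.inl (i, ⟨t.val - 1, by omega⟩) : St n K) ∈ nstep n K (Sum.inl (i,t)) a := by
  simp only [nstep]
  split_ifs <;> first | (exfalso; omega) | simp | (simp; omega)

lemma step_e_sink1 (ht : t.val = K+1) (htop : ¬ i.val = n - 1) (ha : a.val = i.val + 1) :
    (Sum.inr () : St n K) ∈ nstep n K (Sum.inl (i,t)) a := by
  simp only [nstep]
  split_ifs <;> first | (exfalso; omega) | simp | (simp; omega)

lemma step_e_sink2 (ht : K + 1 < t.val) (htop : ¬ i.val = n - 1) (ha : i.val + 1 < a.val) :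
    (Sum.inr () : St n K) ∈ nstep n K (Sum.inl (i,t)) a := by
  simp only [nstep]
  split_ifs <;> first | (exfalso; omega) | simp | (simp; omega)

end StepLemmas

/-- the deterministic c-chain: along any non-accepted word, widget `i` tracks `DV u i`. -/
lemma cpath {n K : ℕ} (v : List (Fin n)) (hv : v ∉ (nfa n K).accepts) (i : Fin n) :
    ∀ u s, v = u ++ s → ∃ t : Fin (2*K+1),
      t.val = DV u i.val ∧ t.val ≤ K ∧ Sum.inl (i, t) ∈ (nfa n K).eval u := by
  intro u
  induction u using List.reverseRecOn with
  | nil =>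
    intro s hs
    refine ⟨⟨0, by omega⟩, by simp [DV, Z], by simp, ?_⟩
    exact ⟨i, rfl⟩
  | append_singleton u a ih =>
    intro s hs
    obtain ⟨t, htv, hb, hmem⟩ := ih (a :: s) (by simpa using hs)
    have hDnext := DV_append_singleton u a i.val
    have hsplit2 : v = (u ++ [a]) ++ s := by simpa using hs
    have hacc : (Sum.inr () : St n K) ∈ nstep n K (Sum.inl (i,t)) a → False := by
      intro hsink
      apply hv
      rw [hsplit2]
      refine sink_run n K s (u ++ [a]) ?_
      rw [NFA.eval_append_singleton, NFA.mem_stepSet]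
      exact ⟨_, hmem, hsink⟩
    have hmem' : ∀ t' : St n K, t' ∈ nstep n K (Sum.inl (i,t)) a →
        t' ∈ (nfa n K).eval (u ++ [a]) := by
      intro t' h
      rw [NFA.eval_append_singleton, NFA.mem_stepSet]
      exact ⟨_, hmem, h⟩
    rcases lt_trichotomy a.val i.val with hc | hc | hc
    · refine ⟨t, ?_, hb, hmem' _ (step_c_stay hb hc)⟩
      rw [hDnext, dstep_gt _ hc]
      exact htv
    · by_cases hlt : t.val < K
      · refine ⟨⟨t.val + 1, by omega⟩, ?_, ?_, hmem' _ (step_c_inc hlt hc)⟩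
        · show t.val + 1 = DV (u ++ [a]) i.val
          rw [hDnext, hc, dstep_self, htv]
        · show t.val + 1 ≤ K
          omega
      · exact absurd (step_c_sink_inc (by omega) hc) hacc
    · have hD0 : DV (u ++ [a]) i.val = 0 := by rw [hDnext, dstep_lt _ hc]
      by_cases hc1 : a.val = i.val + 1
      · refine ⟨⟨0, by omega⟩, ?_, ?_, hmem' _ (step_c_zero hb hc1)⟩
        · show 0 = DV (u ++ [a]) i.val
          rw [hD0]
        · show 0 ≤ K
          omega
      · by_cases h0 : t.val = 0
        · refine ⟨⟨0, by omega⟩, ?_, ?_, hmem' _ (step_c_zero' hb h0 (by omega))⟩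
          · show 0 = DV (u ++ [a]) i.val
            rw [hD0]
          · show 0 ≤ K
            omega
        · exact absurd (step_c_sinkclose hb (by omega) (by omega)) hacc

/-- the e-chain: if an e-state is alive, the remaining block has exactly `r` events. -/
lemma epath {n K : ℕ} (v : List (Fin n)) (hv : v ∉ (nfa n K).accepts) (i : Fin n)
    (htop : ¬ i.val = n - 1) :
    ∀ s u₁ (t : Fin (2*K+1)), K + 1 ≤ t.val → v = u₁ ++ s →
      Sum.inl (i, t) ∈ (nfa n K).eval u₁ →
      ((s.map Fin.val).takeWhile (· ≤ i.val + 1)).count (i.val + 1) + (K + 1) = t.val := by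
  intro s
  induction s with
  | nil =>
    intro u₁ t htK hsplit hmem
    by_contra hne
    simp only [List.map_nil, List.takeWhile_nil, List.count_nil] at hne
    apply hv
    rw [hsplit, List.append_nil]
    refine ⟨Sum.inl (i, t), ?_, hmem⟩
    show (if i.val = n - 1 then t.val < K else ((1 ≤ t.val ∧ t.val ≤ K) ∨ K + 2 ≤ t.val))
    rw [if_neg htop]
    right
    omega
  | cons a s ih =>
    intro u₁ t htK hsplit hmem
    have hmem' : ∀ t' : St n K, t' ∈ nstep n K (Sum.inl (i,t)) a →
        t' ∈ (nfa n K).eval (u₁ ++ [a]) := by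
      intro t' h
      rw [NFA.eval_append_singleton, NFA.mem_stepSet]
      exact ⟨_, hmem, h⟩
    have hacc : (Sum.inr () : St n K) ∈ nstep n K (Sum.inl (i,t)) a → False := by
      intro hsink
      apply hv
      rw [hsplit, show u₁ ++ a :: s = (u₁ ++ [a]) ++ s by simp]
      exact sink_run n K s (u₁ ++ [a]) (hmem' _ hsink)
    have hsplit' : v = (u₁ ++ [a]) ++ s := by rw [hsplit]; simp
    rcases Nat.lt_or_ge i.val a.val with hc | hc
    · by_cases hc1 : a.val = i.val + 1
      · -- event letter
        by_cases h1 : t.val = K + 1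
        · exact absurd (step_e_sink1 h1 htop hc1) hacc
        · have hrec : ((s.map Fin.val).takeWhile (· ≤ i.val + 1)).count (i.val + 1) + (K + 1)
              = t.val - 1 :=
            ih (u₁ ++ [a]) ⟨t.val - 1, by have := t.isLt; omega⟩
              (by show K + 1 ≤ t.val - 1; omega)
              hsplit' (hmem' _ (step_e_dec (by omega) htop hc1))
          rw [List.map_cons, List.takeWhile_cons, if_pos (by simp; omega)]
          rw [hc1, List.count_cons_self]
          omega
      · -- block closes
        by_cases h1 : t.val = K + 1
        · rw [List.map_cons, List.takeWhile_cons, if_neg (by simp; omega)]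
          simp only [List.count_nil]
          omega
        · exact absurd (step_e_sink2 (by omega) htop (by omega)) hacc
    · -- a ≤ i : state unchanged
      have hrec : ((s.map Fin.val).takeWhile (· ≤ i.val + 1)).count (i.val + 1) + (K + 1)
          = t.val :=
        ih (u₁ ++ [a]) t htK hsplit' (hmem' _ (step_e_stay (by omega) htop hc))
      rw [List.map_cons, List.takeWhile_cons, if_pos (by simp; omega),
        List.count_cons_of_ne (by omega)]
      exact hrec

/-- non-accepted words satisfy all the conditions -/
lemma not_accepted_cond {n K : ℕ} (hn : 1 ≤ n) (v : List (Fin n))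
    (hv : v ∉ (nfa n K).accepts) : COND K n (v.map Fin.val) := by
  refine ⟨?_, ?_, ?_⟩
  · intro x hx
    obtain ⟨a, -, rfl⟩ := List.mem_map.mp hx
    exact a.isLt
  · -- count of the top letter
    have hiT : (n - 1) < n := by omega
    obtain ⟨t, htv, hb, hmem⟩ := cpath v hv ⟨n-1, hiT⟩ v [] (by simp)
    have hnacc : Sum.inl ((⟨n-1, hiT⟩ : Fin n), t) ∉ (nfa n K).accept :=
      fun h => hv ⟨_, h, hmem⟩
    have hK' : ¬ (t.val < K) := by
      intro h
      apply hnacc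
      show (if ((⟨n-1, hiT⟩ : Fin n)).val = n - 1 then t.val < K
        else ((1 ≤ t.val ∧ t.val ≤ K) ∨ K + 2 ≤ t.val))
      rw [if_pos rfl]
      exact h
    have hDv : DD Z (v.map Fin.val) (n-1) = K := by
      have : t.val = DD Z (v.map Fin.val) (n-1) := htv
      omega
    have hcnt := DD_count (f := Z) (u := v.map Fin.val) (l := n-1)
      (fun x hx => by
        obtain ⟨a, -, rfl⟩ := List.mem_map.mp hx
        have := a.isLt
        omega)
    rw [hDv] at hcnt
    simpa [Z] using hcnt.symm
  · intro i hi
    have hiF : i < n := by omega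
    have htop : ¬ ((⟨i, hiF⟩ : Fin n)).val = n - 1 := by
      show ¬ i = n - 1
      omega
    constructor
    · -- γδ condition
      intro u s hsplit hbd
      obtain ⟨uF, sF, hveq, huF, hsF⟩ := List.map_eq_append_iff.mp hsplit
      subst hveq
      obtain ⟨t, htv, hb, hmem⟩ := cpath _ hv ⟨i, hiF⟩ uF sF rfl
      have htD : t.val = DD Z u i := by rw [htv, ← huF]; rfl
      have hnacc : ∀ st ∈ (nfa n K).accept, st ∉ (nfa n K).eval (uF ++ sF) := by
        intro st h1 h2
        exact hv ⟨st, h1, h2⟩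
      rcases hbd with rfl | ⟨x, s', rfl, hx⟩
      · -- end of word
        obtain rfl : sF = [] := by
          cases sF
          · rfl
          · simp at hsF
        have : Sum.inl ((⟨i, hiF⟩ : Fin n), t) ∉ (nfa n K).accept := by
          intro h
          exact hnacc _ h (by simpa using hmem)
        by_contra h0
        apply this
        show (if ((⟨i, hiF⟩ : Fin n)).val = n - 1 then t.val < K
          else ((1 ≤ t.val ∧ t.val ≤ K) ∨ K + 2 ≤ t.val))
        rw [if_neg htop]
        left
        omega
      · -- boundary letter
        obtain ⟨xF, sF', rfl, hxv, hs'⟩ : ∃ xF sF', sF = xF :: sF' ∧ xF.val = x ∧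
            sF'.map Fin.val = s' := by
          cases sF with
          | nil => simp at hsF
          | cons b bs =>
            simp only [List.map_cons, List.cons.injEq] at hsF
            exact ⟨b, bs, rfl, hsF.1, hsF.2⟩
        by_contra h0
        apply hv
        rw [show uF ++ xF :: sF' = (uF ++ [xF]) ++ sF' by simp]
        refine sink_run n K sF' (uF ++ [xF]) ?_
        rw [NFA.eval_append_singleton, NFA.mem_stepSet]
        refine ⟨_, hmem, step_c_sinkclose hb (by omega) (by show i + 1 < xF.val; omega)⟩
    · -- ε condition
      intro u s hsplit
      obtain ⟨uF, sF, hveq, huF, hsF⟩ := List.map_eq_append_iff.mp hsplit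
      subst hveq
      obtain ⟨xF, sF', rfl, hxv, hs'⟩ : ∃ xF sF', sF = xF :: sF' ∧ xF.val = i + 1 ∧
          sF'.map Fin.val = s := by
        cases sF with
        | nil => simp at hsF
        | cons b bs =>
          simp only [List.map_cons, List.cons.injEq] at hsF
          exact ⟨b, bs, rfl, hsF.1, hsF.2⟩
      obtain ⟨t, htv, hb, hmem⟩ := cpath _ hv ⟨i, hiF⟩ uF (xF :: sF') rfl
      have htD : t.val = DD Z u i := by rw [htv, ← huF]; rfl
      by_cases h0 : t.val = 0
      · exfalso
        apply hv
        rw [show uF ++ xF :: sF' = (uF ++ [xF]) ++ sF' by simp]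
        refine sink_run n K sF' (uF ++ [xF]) ?_
        rw [NFA.eval_append_singleton, NFA.mem_stepSet]
        exact ⟨_, hmem, step_c_sink0 hb h0 (by show xF.val = i + 1; omega)⟩
      · have hememb : (Sum.inl ((⟨i, hiF⟩ : Fin n), (⟨K + t.val, by omega⟩ : Fin (2*K+1))) : St n K)
            ∈ (nfa n K).eval (uF ++ [xF]) := by
          rw [NFA.eval_append_singleton, NFA.mem_stepSet]
          exact ⟨_, hmem, step_c_e hb (by omega) (by show xF.val = i + 1; omega)⟩
        have hep : ((sF'.map Fin.val).takeWhile (· ≤ (⟨i, hiF⟩ : Fin n).val + 1)).count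
              ((⟨i, hiF⟩ : Fin n).val + 1) + (K + 1) = K + t.val :=
          epath _ hv ⟨i, hiF⟩ htop sF' (uF ++ [xF]) ⟨K + t.val, by omega⟩
            (by show K + 1 ≤ K + t.val; omega) (by simp) hememb
        have : ((s.takeWhile (· ≤ i + 1)).count (i + 1)) + (K + 1) = K + t.val := by
          rw [← hs']
          exact hep
        omega

/-! ### Soundness: the word itself is not accepted -/

def InvP (n K : ℕ) (u s : List (Fin n)) (st : St n K) : Prop :=
  ∃ (i : Fin n) (t : Fin (2*K+1)), st = Sum.inl (i, t) ∧
    (t.val = DD Z (u.map Fin.val) i.val ∨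
      (i.val + 2 ≤ n ∧
        t.val = K + 1 + (((s.map Fin.val).takeWhile (· ≤ i.val + 1)).count (i.val + 1))))

lemma sound {n K : ℕ} (hn : 1 ≤ n) (hK : 1 ≤ K) (w : List (Fin n))
    (hw : w.map Fin.val = Wd K n) : w ∉ (nfa n K).accepts := by
  have key : ∀ u s, w = u ++ s → ∀ st ∈ (nfa n K).eval u,
      InvP n K u s st := by
    intro u
    induction u using List.reverseRecOn with
    | nil =>
      intro s hs st hst
      obtain ⟨i, rfl⟩ := hst
      exact ⟨i, _, rfl, Or.inl (by simp [Z])⟩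
    | append_singleton u a ih =>
      intro s hs st' hst'
      have hsp : w = u ++ (a :: s) := by simpa using hs
      have hWsplit : Wd K n = (u.map Fin.val) ++ (a.val :: s.map Fin.val) := by
        rw [← hw, hsp]; simp
      have F1 : ∀ l, DD Z (u.map Fin.val) l ≤ K := by
        intro l
        have := Wd_prefix_bound K n Z (u.map Fin.val) (a.val :: s.map Fin.val) l hWsplit
        simpa [Z] using this
      have F2 : DD Z (u.map Fin.val) a.val < K := by
        have := Wd_prefix_lt K n Z (u.map Fin.val) a.val (s.map Fin.val) hWsplit
        simpa [Z] using this
      have hDstep : ∀ l, DD Z ((u ++ [a]).map Fin.val) l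
          = dstep (DD Z (u.map Fin.val)) a.val l := fun l => DV_append_singleton u a l
      rw [NFA.eval_append_singleton, NFA.mem_stepSet] at hst'
      obtain ⟨st, hst, hstep⟩ := hst'
      obtain ⟨i, t, rfl, hInv⟩ := ih (a :: s) hsp st hst
      replace hstep : st' ∈ nstep n K (Sum.inl (i, t)) a := hstep
      simp only [nstep] at hstep
      rcases hInv with htv | ⟨hiN, hte⟩
      · -- c-state
        have hbK : t.val ≤ K := htv ▸ F1 i.val
        by_cases h1 : i.val = n - 1
        · rw [if_pos h1, if_pos hbK] at hstep
          by_cases h3 : a.val = i.val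
          · rw [if_pos h3] at hstep
            have hlt : t.val < K := by rw [htv, ← h3]; exact F2
            rw [dif_pos hlt] at hstep
            rw [Set.mem_singleton_iff] at hstep
            subst hstep
            refine ⟨i, _, rfl, Or.inl ?_⟩
            show t.val + 1 = _
            rw [hDstep, h3, dstep_self, htv]
          · rw [if_neg h3] at hstep
            rw [Set.mem_singleton_iff] at hstep
            subst hstep
            refine ⟨i, t, rfl, Or.inl ?_⟩
            have hlt : a.val < i.val := by have := a.isLt; omega
            rw [hDstep, dstep_gt _ hlt]
            exact htv
        · rw [if_neg h1, dif_pos hbK] at hstep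
          rcases lt_trichotomy a.val i.val with hc | hc | hc
          · rw [if_pos hc] at hstep
            rw [Set.mem_singleton_iff] at hstep
            subst hstep
            refine ⟨i, t, rfl, Or.inl ?_⟩
            rw [hDstep, dstep_gt _ hc]
            exact htv
          · rw [if_neg (by omega), if_pos hc] at hstep
            have hlt : t.val < K := by rw [htv, ← hc]; exact F2
            rw [dif_pos hlt] at hstep
            rw [Set.mem_singleton_iff] at hstep
            subst hstep
            refine ⟨i, _, rfl, Or.inl ?_⟩
            show t.val + 1 = _
            rw [hDstep, hc, dstep_self, htv]
          · rw [if_neg (by omega), if_neg (by omega)] at hstep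
            by_cases hc1 : a.val = i.val + 1
            · rw [if_pos hc1] at hstep
              have hiN : i.val + 2 ≤ n := by have := a.isLt; omega
              have hper : ((s.map Fin.val).takeWhile (· ≤ i.val + 1)).count (i.val + 1) + 1
                  = DD Z (u.map Fin.val) i.val :=
                (PER_W K n i.val hiN).2 (u.map Fin.val) (s.map Fin.val)
                  (by rw [hWsplit, hc1])
              have ht1 : ¬ (t.val = 0) := by omega
              rw [if_neg ht1] at hstep
              simp only [Set.mem_insert_iff, Set.mem_singleton_iff] at hstep
              rcases hstep with rfl | rfl
              · refine ⟨i, _, rfl, Or.inl ?_⟩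
                show (0 : ℕ) = _
                rw [hDstep, dstep_lt _ hc]
              · refine ⟨i, _, rfl, Or.inr ⟨hiN, ?_⟩⟩
                show K + t.val = _
                omega
            · rw [if_neg hc1] at hstep
              have hiN : i.val + 2 ≤ n := by have := a.isLt; omega
              have hgd : DD Z (u.map Fin.val) i.val = 0 :=
                (PER_W K n i.val hiN).1 (u.map Fin.val) (a.val :: s.map Fin.val) hWsplit
                  (Or.inr ⟨a.val, s.map Fin.val, rfl, by omega⟩)
              rw [if_pos (by omega)] at hstep
              rw [Set.mem_singleton_iff] at hstep
              subst hstep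
              refine ⟨i, _, rfl, Or.inl ?_⟩
              show (0 : ℕ) = _
              rw [hDstep, dstep_lt _ hc]
      · -- e-state
        have h1 : ¬ i.val = n - 1 := by omega
        have hc0nn : K + 1 ≤ t.val := by omega
        rw [if_neg h1, dif_neg (by omega)] at hstep
        rcases le_or_gt a.val i.val with hc | hc
        · rw [if_pos hc] at hstep
          rw [Set.mem_singleton_iff] at hstep
          subst hstep
          refine ⟨i, t, rfl, Or.inr ⟨hiN, ?_⟩⟩
          have hcnt : (((a :: s).map Fin.val).takeWhile (· ≤ i.val + 1)).count (i.val + 1)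
              = ((s.map Fin.val).takeWhile (· ≤ i.val + 1)).count (i.val + 1) := by
            simp only [List.map_cons, List.takeWhile_cons,
              if_pos (by simp; omega : (decide (a.val ≤ i.val + 1)) = true)]
            rw [List.count_cons_of_ne (by omega)]
          rw [hte, hcnt]
        · by_cases hc1 : a.val = i.val + 1
          · rw [if_neg (by omega), if_pos hc1] at hstep
            have hcnt : (((a :: s).map Fin.val).takeWhile (· ≤ i.val + 1)).count (i.val + 1)
                = ((s.map Fin.val).takeWhile (· ≤ i.val + 1)).count (i.val + 1) + 1 := by
              simp only [List.map_cons, List.takeWhile_cons,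
                if_pos (by simp; omega : (decide (a.val ≤ i.val + 1)) = true)]
              rw [hc1, List.count_cons_self]
            rw [hcnt] at hte
            rw [if_neg (by omega)] at hstep
            rw [Set.mem_singleton_iff] at hstep
            subst hstep
            refine ⟨i, _, rfl, Or.inr ⟨hiN, ?_⟩⟩
            show t.val - 1 = _
            omega
          · rw [if_neg (by omega), if_neg hc1] at hstep
            have hcnt : (((a :: s).map Fin.val).takeWhile (· ≤ i.val + 1)).count (i.val + 1)
                = 0 := by
              simp only [List.map_cons, List.takeWhile_cons,
                if_neg (by simp; omega : ¬ (decide (a.val ≤ i.val + 1)) = true)]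
              simp
            rw [hcnt] at hte
            rw [if_pos (by omega)] at hstep
            exact hstep.elim
  intro hacc
  obtain ⟨st, hstacc, hstev⟩ := hacc
  obtain ⟨i, t, rfl, hcl⟩ := key w [] (by simp) st hstev
  have hA : (if i.val = n - 1 then t.val < K
      else ((1 ≤ t.val ∧ t.val ≤ K) ∨ K + 2 ≤ t.val)) := hstacc
  rcases hcl with htv | ⟨hiN, hte⟩
  · rw [hw] at htv
    by_cases h1 : i.val = n - 1
    · rw [if_pos h1] at hA
      have : DD Z (Wd K n) (n - 1) = Z (n-1) + K := Wd_D_top K n hn Z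
      rw [h1] at htv
      simp [Z] at this
      omega
    · rw [if_neg h1] at hA
      have hlow : DD Z (Wd K n) i.val = 0 :=
        Wd_D_low K n Z i.val hK (by have := i.isLt; omega)
      rw [hlow] at htv
      omega
  · have h1 : ¬ i.val = n - 1 := by omega
    rw [if_neg h1] at hA
    simp only [List.map_nil, List.takeWhile_nil, List.count_nil] at hte
    omega

/-! ### Assembly -/

lemma pmap_val {n : ℕ} : ∀ (l : List ℕ) (h : ∀ x ∈ l, x < n),
    (l.pmap (fun x hx => (⟨x, hx⟩ : Fin n)) h).map Fin.val = l := by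
  intro l
  induction l with
  | nil => intro h; rfl
  | cons x l ih =>
    intro h
    simp only [List.pmap, List.map_cons]
    rw [ih (fun y hy => h y (by simp [hy]))]

lemma master (n K : ℕ) (hn : 1 ≤ n) (hK : 1 ≤ K) :
    ∃ (σ : Type) (_ : Fintype σ) (M : NFA (Fin n) σ) (w0 : List (Fin n)),
      Fintype.card σ = n * (2 * K + 1) + 1 ∧
      w0.length = (K + n).choose n - 1 ∧
      ∀ w, w ∈ M.accepts ↔ w ≠ w0 := by
  refine ⟨St n K, inferInstance, nfa n K,
    (Wd K n).pmap (fun x hx => ⟨x, hx⟩) (Wd_letters K n), ?_, ?_, ?_⟩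
  · simp [mul_comm]
  · rw [List.length_pmap]
    have := Wd_len K n
    omega
  · have hmap : ((Wd K n).pmap (fun x hx => (⟨x, hx⟩ : Fin n)) (Wd_letters K n)).map Fin.val
        = Wd K n := pmap_val _ _
    intro w
    constructor
    · intro hacc heq
      subst heq
      exact sound hn hK _ hmap hacc
    · intro hne
      by_contra hnacc
      have hC := not_accepted_cond hn w hnacc
      have hwW : w.map Fin.val = Wd K n := COND_unique K n (w.map Fin.val) (by omega) hC
      apply hne
      apply List.map_injective_iff.mpr Fin.val_injective
      rw [hwW, hmap]

lemma two_pow_le_choose : ∀ n : ℕ, 2 ^ n ≤ (n + n).choose n := by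
  intro n
  induction n with
  | zero => simp
  | succ n ih =>
    have h1 : (n + 1 + (n + 1)).choose (n + 1)
        = (n + n + 1).choose n + (n + n + 1).choose (n + 1) := by
      rw [show n + 1 + (n + 1) = (n + n + 1) + 1 by omega, Nat.choose_succ_succ]
    have h2 : (n + n + 1).choose n = (n + n + 1).choose (n + 1) := by
      have := Nat.choose_symm (n := n + n + 1) (k := n + 1) (by omega)
      rw [show n + n + 1 - (n + 1) = n by omega] at this
      exact this
    have h3 : (n + n + 1).choose (n + 1) = (n + n).choose n + (n + n).choose (n + 1) := by
      rw [show n + n + 1 = (n + n) + 1 by omega, Nat.choose_succ_succ]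
    have h4 : 2 ^ (n + 1) = 2 ^ n + 2 ^ n := by ring
    omega

end NfaSingle

/-- For every `n, m ≥ 1` there is an NFA with `n(2m+1)+1` (i.e. `O(m·n)`) states
over an `n`-letter alphabet whose complement language is a single word of length
`binom(m+n,n) - 1`; in particular (taking `m = n`) there is an NFA with
`O(n^2)` states whose only non-accepted word has length at least `2^n - 1`. -/
theorem stmt_13 (n m : ℕ) (hn : 1 ≤ n) (hm : 1 ≤ m) :
    (∃ (σ : Type) (_ : Fintype σ) (M : NFA (Fin n) σ) (w0 : List (Fin n)),
        Fintype.card σ = n * (2 * m + 1) + 1 ∧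
        w0.length = (m + n).choose n - 1 ∧
        ∀ w, w ∈ M.accepts ↔ w ≠ w0) ∧
    (∃ (σ : Type) (_ : Fintype σ) (M : NFA (Fin n) σ) (w0 : List (Fin n)),
        Fintype.card σ = n * (2 * n + 1) + 1 ∧
        2 ^ n - 1 ≤ w0.length ∧
        ∀ w, w ∈ M.accepts ↔ w ≠ w0) := by
  constructor
  · exact NfaSingle.master n m hn hm
  · obtain ⟨σ, inst, M, w0, hcard, hlen, hacc⟩ := NfaSingle.master n n hn hn
    refine ⟨σ, inst, M, w0, hcard, ?_, hacc⟩
    have := NfaSingle.two_pow_le_choose n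
    omega
end

section
/- Let A be an NFA over Σ accepting exactly Σ* \ {w} for a word w = u a v (u, v words, a a letter). Then for every such factorization, there exists a state q of A reachable from an initial state under u such that a is not a self-loop letter of q (i.e., q ∉ q·a) — equivalently, not all states reachable under the proper prefix u have a self-loop under the next letter a. -/
private lemma evalFrom_mono {α σ : Type*} (M : NFA α σ) (x : List α)
    {S T : Set σ} (h : S ⊆ T) : M.evalFrom S x ⊆ M.evalFrom T x := by
  induction x generalizing S T with
  | nil => simpa [NFA.evalFrom] using h
  | cons b xs ih =>
    simp only [NFA.evalFrom, List.foldl_cons] at *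
    apply ih
    intro q hq
    rw [NFA.mem_stepSet] at hq ⊢
    rcases hq with ⟨p, hp, hq⟩
    exact ⟨p, h hp, hq⟩

/-- If an NFA accepts exactly `Σ* \ {w}` and `w = u a v`, then some state `q`
reachable from the initial states under `u` has no self-loop under `a`. -/
theorem stmt_15 {α σ : Type*} (M : NFA α σ) (w : List α)
    (hL : ∀ v, v ∈ M.accepts ↔ v ≠ w)
    (u : List α) (a : α) (v : List α) (hw : w = u ++ a :: v) :
    ∃ q ∈ M.evalFrom M.start u, q ∉ M.step q a := by
  by_contra h
  push_neg at h
  -- S ⊆ stepSet S a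
  have hsub : M.evalFrom M.start u ⊆ M.stepSet (M.evalFrom M.start u) a := by
    intro q hq
    rw [NFA.mem_stepSet]
    exact ⟨q, hq, h q hq⟩
  -- u ++ v ≠ w so it's accepted
  have hne : u ++ v ≠ w := by
    intro he
    rw [hw] at he
    have := congrArg List.length he
    simp at this
  have hacc : u ++ v ∈ M.accepts := (hL _).mpr hne
  rw [NFA.mem_accepts] at hacc
  rcases hacc with ⟨q, hqF, hq⟩
  have hq' : q ∈ M.evalFrom M.start w := by
    rw [hw]
    have h1 : M.evalFrom M.start (u ++ v) = M.evalFrom (M.evalFrom M.start u) v := by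
      simp [NFA.evalFrom, List.foldl_append]
    have h2 : M.evalFrom M.start (u ++ a :: v)
        = M.evalFrom (M.stepSet (M.evalFrom M.start u) a) v := by
      simp [NFA.evalFrom, List.foldl_append]
    rw [h2]
    exact evalFrom_mono M v hsub (h1 ▸ hq)
  have : w ∈ M.accepts := (NFA.mem_accepts).mpr ⟨q, hqF, hq'⟩
  exact (hL w).mp this rfl
end

section
/- For any suffix of W_{k,n} of the form a_i w (i.e., W_{k,n} = u a_i w for some word u), the word w is not accepted by A_{k,n} starting from state (k+1; i). -/
/-- States of the automaton `A_{k,n}`: `some (j, m)` is the state `(j; m)`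
(`0 ≤ j ≤ 2k`, `1 ≤ m ≤ n`), and `none` is the sink state `max`. -/
abbrev ASt : Type := Option (ℕ × ℕ)

/-- The transition function of `A_{k,n}` (closed form of rules 1–6 of the paper):
from `(j;m)` under `a_l`: a self-loop if `l < m`; if `l = m` then to `(j+1;m')`
for all `m' ≤ m` when `j < k`, to `max` when `j ∈ {k, 2k}`, and to `(j+1;m)`
otherwise; if `l > m` then to `max` when `(j;m)` is accepting (`j < k`) and to
`(k+1; l)` otherwise. `max` has self-loops under all letters. -/
def Astep (k : ℕ) : ASt → ℕ → Set ASt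
  | none, _ => {none}
  | some (j, m), l =>
    if l < m then {some (j, m)}
    else if l = m then
      if j < k then {s | ∃ m', 1 ≤ m' ∧ m' ≤ m ∧ s = some (j+1, m')}
      else if j = k ∨ j = 2*k then {none}
      else {some (j+1, m)}
    else
      if j < k then {none} else {some (k+1, l)}

/-- The ptNFA `A_{k,n}` over `Σ_n = {1,...,n}`, with initial states `(0;m)` and
accepting states `max` and the `(j;m)` with `j < k`. -/
def Aaut (k n : ℕ) : NFA ℕ ASt where
  step := Astep k
  start := {s | ∃ m, 1 ≤ m ∧ m ≤ n ∧ s = some (0, m)}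
  accept := {none} ∪ {s | ∃ j m, j < k ∧ 1 ≤ m ∧ m ≤ n ∧ s = some (j, m)}

/-! ### Auxiliary definitions -/

def drun (k : ℕ) : ASt → List ℕ → ASt
  | s, [] => s
  | none, _ :: w => drun k none w
  | some (j, m), l :: w =>
      if l < m then drun k (some (j, m)) w
      else if l = m then (if j = 2*k then drun k none w else drun k (some (j+1, m)) w)
      else drun k (some (k+1, l)) w

inductive Pat (m : ℕ) : ℕ → List ℕ → Prop
  | zero : Pat m 0 [m]
  | more (c : ℕ) (v t : List ℕ) : (∀ x ∈ v, x < m) → Pat m c t → Pat m (c+1) (m :: v ++ t)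

lemma pat_count {m c : ℕ} {t : List ℕ} (h : Pat m c t) : List.count m t = c + 1 := by
  induction h with
  | zero => simp
  | more c v t hv hp ih =>
      have hv0 : List.count m v = 0 := by
        refine List.count_eq_zero_of_not_mem (fun hm => ?_)
        exact absurd (hv m hm) (lt_irrefl m)
      simp [List.count_cons, List.count_append, hv0, ih]

lemma pat_le {m c : ℕ} {t : List ℕ} (h : Pat m c t) : ∀ x ∈ t, x ≤ m := by
  induction h with
  | zero => simp
  | more c v t hv hp ih =>
      intro x hx
      rcases List.mem_cons.1 hx with h1 | h2
      · omega
      · rcases List.mem_append.1 h2 with h3 | h4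
        · exact le_of_lt (hv x h3)
        · exact ih x h4

/-! ### Letters of W -/

lemma W_le : ∀ k n x, x ∈ W k n → x ≤ n
  | 0, n, x, h => by simp [W] at h
  | k+1, 0, x, h => by simp [W] at h
  | k+1, n+1, x, h => by
      rw [W] at h
      rcases List.mem_append.1 h with h1 | h2
      · exact le_trans (W_le (k+1) n x h1) (Nat.le_succ n)
      · rcases List.mem_cons.1 h2 with h3 | h4
        · omega
        · exact W_le k (n+1) x h4
termination_by k n => k + n

lemma W_count : ∀ k n m, n ≤ m → List.count m (W k n) ≤ k
  | 0, _, _, _ => by simp [W]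
  | k+1, 0, m, h => by simp [W]
  | k+1, n+1, m, h => by
      rw [W]
      have h1 : List.count m (W (k+1) n) = 0 := by
        refine List.count_eq_zero_of_not_mem (fun hm => ?_)
        have := W_le (k+1) n m hm; omega
      have h2 : List.count m (W k (n+1)) ≤ k := W_count k (n+1) m h
      rw [List.count_append, List.count_cons, h1]
      split <;> omega
termination_by k n => k + n

/-! ### Infix splitting -/

lemma prefix_of_sep {b : ℕ} : ∀ (t A r B : List ℕ), t ++ r = A ++ b :: B → b ∉ t → t <+: A
  | [], A, r, B, h, hb => List.nil_prefix
  | x :: t', A, r, B, h, hb => by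
      cases A with
      | nil =>
          simp only [List.cons_append, List.nil_append, List.cons.injEq] at h
          exact absurd (h.1 ▸ (List.mem_cons_self : x ∈ x :: t')) hb
      | cons a A' =>
          simp only [List.cons_append, List.cons.injEq] at h
          obtain ⟨hx, h'⟩ := h
          have ht := prefix_of_sep t' A' r B h' (fun hm => hb (List.mem_cons_of_mem _ hm))
          obtain ⟨s, hs⟩ := ht
          exact ⟨s, by simp [hx, ← hs]⟩

lemma infix_split_s16 {b : ℕ} : ∀ (u t r A B : List ℕ), u ++ t ++ r = A ++ b :: B → b ∉ t →
    t <:+: A ∨ t <:+: B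
  | [], t, r, A, B, h, hb => by
      left
      have := prefix_of_sep t A r B (by simpa using h) hb
      exact this.isInfix
  | x :: u', t, r, A, B, h, hb => by
      cases A with
      | nil =>
          right
          simp only [List.cons_append, List.nil_append, List.cons.injEq] at h
          exact ⟨u', r, h.2⟩
      | cons a A' =>
          simp only [List.cons_append, List.cons.injEq] at h
          rcases infix_split_s16 u' t r A' B h.2 hb with h1 | h2
          · exact Or.inl (List.infix_cons_iff.mpr (Or.inr h1))
          · exact Or.inr h2

/-! ### Core combinatorial lemma : W contains no k-pattern -/

lemma W_no_pat : ∀ k n m c t, k ≤ c → t <:+: W k n → ¬ Pat m c t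
  | 0, n, m, c, t, hc, hinf, hp => by
      rw [show W 0 n = [] from by simp [W]] at hinf
      have := List.eq_nil_of_infix_nil hinf
      subst this
      have := pat_count hp
      simp at this
  | k+1, 0, m, c, t, hc, hinf, hp => by
      rw [show W (k+1) 0 = [] from by simp [W]] at hinf
      have := List.eq_nil_of_infix_nil hinf
      subst this
      have := pat_count hp
      simp at this
  | k+1, n+1, m, c, t, hc, hinf, hp => by
      by_cases hm : n + 1 ≤ m
      · -- counting argument
        have h1 : List.count m t = c + 1 := pat_count hp
        have h2 : List.count m t ≤ List.count m (W (k+1) (n+1)) :=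
          List.Sublist.count_le m hinf.sublist
        have h3 : List.count m (W (k+1) (n+1)) ≤ k + 1 := W_count (k+1) (n+1) m hm
        omega
      · -- m ≤ n : split around the letter n+1
        push_neg at hm
        rw [W] at hinf
        have hb : (n+1) ∉ t := fun hmem => by
          have := pat_le hp (n+1) hmem; omega
        obtain ⟨u, r, hur⟩ := hinf
        rcases infix_split_s16 u t r (W (k+1) n) (W k (n+1)) hur hb with h1 | h2
        · exact W_no_pat (k+1) n m c t (by omega) h1 hp
        · exact W_no_pat k (n+1) m c t (by omega) h2 hp
termination_by k n => k + n

/-! ### The deterministic run and the NFA -/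

lemma drun_none (k : ℕ) : ∀ w, drun k none w = none
  | [] => rfl
  | _ :: w => drun_none k w

lemma drun_nil (k : ℕ) (s : ASt) : drun k s [] = s := by
  match s with
  | none => rfl
  | some (j, m) => rfl

def AInv (k : ℕ) : ASt → Prop
  | none => True
  | some (j, _) => k + 1 ≤ j ∧ j ≤ 2 * k

lemma drun_inv (k : ℕ) (hk : 1 ≤ k) : ∀ w s, AInv k s → AInv k (drun k s w)
  | [], s, h => by rw [drun_nil]; exact h
  | l :: w, none, h => drun_inv k hk w none trivial
  | l :: w, some (j, m), h => by
      simp only [drun]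
      split
      · exact drun_inv k hk w _ h
      · split
        · split
          · exact drun_inv k hk w none trivial
          · refine drun_inv k hk w _ ?_
            obtain ⟨h1, h2⟩ := h
            constructor <;> omega
        · refine drun_inv k hk w _ ?_
          constructor <;> omega

lemma eval_drun (k n : ℕ) (hk : 1 ≤ k) :
    ∀ (w : List ℕ) (s : ASt), AInv k s →
      (Aaut k n).evalFrom {s} w = {drun k s w}
  | [], s, h => by rw [drun_nil]; rfl
  | l :: w, s, h => by
      have hstep : (Aaut k n).stepSet {s} l = Astep k s l := by
        simp [NFA.stepSet, Aaut]
      have hev : (Aaut k n).evalFrom {s} (l :: w)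
          = (Aaut k n).evalFrom ((Aaut k n).stepSet {s} l) w := rfl
      rw [hev, hstep]
      cases s with
      | none =>
          rw [show Astep k none l = {none} from rfl, drun]
          exact eval_drun k n hk w none trivial
      | some jm =>
          obtain ⟨j, m⟩ := jm
          obtain ⟨h1, h2⟩ := h
          have hjk : ¬ j < k := by omega
          have hjk2 : j ≠ k := by omega
          simp only [drun]
          by_cases hlm : l < m
          · rw [show Astep k (some (j, m)) l = {some (j, m)} from by
              simp only [Astep]; rw [if_pos hlm]]
            rw [if_pos hlm]
            exact eval_drun k n hk w _ ⟨h1, h2⟩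
          · by_cases hle : l = m
            · by_cases hj2 : j = 2*k
              · rw [show Astep k (some (j, m)) l = {none} from by
                  simp only [Astep]
                  rw [if_neg hlm, if_pos hle, if_neg hjk, if_pos (Or.inr hj2)]]
                rw [if_neg hlm, if_pos hle, if_pos hj2]
                exact eval_drun k n hk w none trivial
              · rw [show Astep k (some (j, m)) l = {some (j+1, m)} from by
                  simp only [Astep]
                  rw [if_neg hlm, if_pos hle, if_neg hjk,
                    if_neg (by omega : ¬ (j = k ∨ j = 2*k))]]
                rw [if_neg hlm, if_pos hle, if_neg hj2]
                exact eval_drun k n hk w _ ⟨by omega, by omega⟩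
            · rw [show Astep k (some (j, m)) l = {some (k+1, l)} from by
                simp only [Astep]; rw [if_neg hlm, if_neg hle, if_neg hjk]]
              rw [if_neg hlm, if_neg hle]
              exact eval_drun k n hk w _ ⟨le_refl _, by omega⟩

/-! ### Death implies a pattern -/

lemma drun_kill (k : ℕ) (hk : 1 ≤ k) :
    ∀ (w : List ℕ) (j m : ℕ), k + 1 ≤ j → j ≤ 2*k →
      drun k (some (j, m)) w = none →
      (∃ v t r, w = v ++ t ++ r ∧ (∀ x ∈ v, x < m) ∧ Pat m (2*k - j) t)
      ∨ (∃ p t r m', w = p ++ t ++ r ∧ Pat m' k t)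
  | [], j, m, h1, h2, hd => by simp [drun] at hd
  | l :: w, j, m, h1, h2, hd => by
      simp only [drun] at hd
      by_cases hlm : l < m
      · rw [if_pos hlm] at hd
        rcases drun_kill k hk w j m h1 h2 hd with ⟨v, t, r, hw, hv, hp⟩ | ⟨p, t, r, m', hw, hp⟩
        · exact Or.inl ⟨l :: v, t, r, by simp [hw], by
            intro x hx; rcases List.mem_cons.1 hx with h | h
            · omega
            · exact hv x h, hp⟩
        · exact Or.inr ⟨l :: p, t, r, m', by simp [hw], hp⟩
      · rw [if_neg hlm] at hd
        by_cases hle : l = m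
        · rw [if_pos hle] at hd
          by_cases hj2 : j = 2*k
          · subst hle hj2
            exact Or.inl ⟨[], [l], w, by simp, by simp, by
              have : 2*k - 2*k = 0 := by omega
              rw [this]; exact Pat.zero⟩
          · rw [if_neg hj2] at hd
            rcases drun_kill k hk w (j+1) m (by omega) (by omega) hd with
              ⟨v, t, r, hw, hv, hp⟩ | ⟨p, t, r, m', hw, hp⟩
            · subst hle
              refine Or.inl ⟨[], l :: v ++ t, r, by simp [hw], by simp, ?_⟩
              have : 2*k - j = (2*k - (j+1)) + 1 := by omega
              rw [this]
              exact Pat.more _ v t hv hp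
            · exact Or.inr ⟨l :: p, t, r, m', by simp [hw], hp⟩
        · rw [if_neg hle] at hd
          rcases drun_kill k hk w (k+1) l (le_refl _) (by omega) hd with
            ⟨v, t, r, hw, hv, hp⟩ | ⟨p, t, r, m', hw, hp⟩
          · refine Or.inr ⟨[], l :: v ++ t, r, l, by simp [hw], ?_⟩
            have : k = (2*k - (k+1)) + 1 := by omega
            rw [this]
            exact Pat.more _ v t hv hp
          · exact Or.inr ⟨l :: p, t, r, m', by simp [hw], hp⟩

/-- For any suffix `a_i w` of `W_{k,n}`, the word `w` is not accepted by
`A_{k,n}` from the state `(k+1; i)`. -/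
theorem stmt_16 (k n : ℕ) (hk : 1 ≤ k) (hn : 1 ≤ n) (i : ℕ) (u w : List ℕ)
    (hsuffix : W k n = u ++ i :: w) :
    ∀ f ∈ (Aaut k n).evalFrom {some (k + 1, i)} w, f ∉ (Aaut k n).accept := by
  intro f hf hacc
  have hinv : AInv k (some (k+1, i)) := ⟨le_refl _, by omega⟩
  rw [eval_drun k n hk w _ hinv] at hf
  rw [Set.mem_singleton_iff] at hf
  subst hf
  rcases hacc with hnone | ⟨j, m, hj, _, _, hs⟩
  · -- dead : extract pattern
    rw [Set.mem_singleton_iff] at hnone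
    have hkill := drun_kill k hk w (k+1) i (le_refl _) (by omega) hnone
    have hpat : ∃ p t r m', i :: w = p ++ t ++ r ∧ Pat m' k t := by
      rcases hkill with ⟨v, t, r, hw, hv, hp⟩ | ⟨p, t, r, m', hw, hp⟩
      · refine ⟨[], i :: v ++ t, r, i, by simp [hw], ?_⟩
        have : k = (2*k - (k+1)) + 1 := by omega
        rw [this]
        exact Pat.more _ v t hv hp
      · exact ⟨i :: p, t, r, m', by simp [hw], hp⟩
    obtain ⟨p, t, r, m', hw, hp⟩ := hpat
    refine W_no_pat k n m' k t (le_refl _) ⟨u ++ p, r, ?_⟩ hp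
    rw [hsuffix, hw]
    simp
  · -- final state some (j,m) with j < k : contradiction with invariant
    have := drun_inv k hk w _ hinv
    rw [hs] at this
    obtain ⟨h1, _⟩ := this
    omega
end
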